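/- arXiv:0812.3933 — 5 statements merged into one kernel-verified Lean document; each statement's English description precedes it below -/
import Mathlib

section
/- Every permutation π can be transformed into the identity permutation by a sequence of at most ⌊3(b(π)−1)/2⌋ operations, each a prefix reversal or a prefix transposition; that is, d_RT(π) ≤ ⌊3(b(π)−1)/2⌋. (Together with the lower bound d_RT(π) ≥ ⌊b(π)/2⌋ this shows that the algorithm SortByRT3 is a 3-approximation.) -/
/-- A permutation on `n` elements: a list `[π₀, π₁, …, π_{n+1}]` of distinct
naturals that is a rearrangement of `0, 1, …, n+1` with `π₀ = 0` and
`π_{n+1} = n+1`. -/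
def IsPerm (n : ℕ) (π : List ℕ) : Prop :=
  π.Perm (List.range (n + 2)) ∧ π.getD 0 0 = 0 ∧ π.getD (n + 1) 0 = n + 1

/-- Breakpoint count `b(π)`: `1` plus the number of indices `i` with
`2 ≤ i ≤ n+1` and `|π_i − π_{i−1}| ≠ 1` (these are exactly the consecutive
pairs of the tail `π₁, …, π_{n+1}`). -/
def bp (π : List ℕ) : ℕ :=
  1 + ((π.drop 1).zip (π.drop 2)).countP
        (fun p => !(p.1 + 1 == p.2 || p.2 + 1 == p.1))

/-- Redefined breakpoint count `b′(π)`: the number of indices `i` with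
`1 ≤ i ≤ n+1` and `|π_i − π_{i−1}| ≠ 1`. -/
def bp' (π : List ℕ) : ℕ :=
  (π.zip (π.drop 1)).countP
    (fun p => !(p.1 + 1 == p.2 || p.2 + 1 == p.1))

/-- Prefix reversal `β(1,j)`: `[π₀, π_{j−1}, …, π₁, π_j, …, π_{n+1}]`. -/
def prefixReversal (π : List ℕ) (j : ℕ) : List ℕ :=
  π.take 1 ++ ((π.drop 1).take (j - 1)).reverse ++ π.drop j

/-- Prefix transposition `τ(1,j,k)`:
`[π₀, π_j, …, π_{k−1}, π₁, …, π_{j−1}, π_k, …, π_{n+1}]`. -/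
def prefixTransposition (π : List ℕ) (j k : ℕ) : List ℕ :=
  π.take 1 ++ (π.drop j).take (k - j) ++ (π.drop 1).take (j - 1) ++ π.drop k

/-- Prefix transreversal `βτ(1,j,k)`:
`[π₀, π_j, …, π_{k−1}, π_{j−1}, …, π₁, π_k, …, π_{n+1}]`. -/
def prefixTransreversal (π : List ℕ) (j k : ℕ) : List ℕ :=
  π.take 1 ++ (π.drop j).take (k - j) ++ ((π.drop 1).take (j - 1)).reverse ++ π.drop k

/-- A prefix operation: a prefix reversal, a prefix transposition, or a
prefix transreversal. -/
inductive PrefOp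
  | rev (j : ℕ)
  | trans (j k : ℕ)
  | transrev (j k : ℕ)

/-- Apply a prefix operation to a permutation. -/
def PrefOp.apply (π : List ℕ) : PrefOp → List ℕ
  | .rev j => prefixReversal π j
  | .trans j k => prefixTransposition π j k
  | .transrev j k => prefixTransreversal π j k

/-- Validity of a prefix operation on a permutation of `n` elements:
`3 ≤ j ≤ n+1` for a prefix reversal, `2 ≤ j < k ≤ n+1` for a prefix
transposition or a prefix transreversal. -/
def PrefOp.Valid (n : ℕ) : PrefOp → Prop
  | .rev j => 3 ≤ j ∧ j ≤ n + 1
  | .trans j k => 2 ≤ j ∧ j < k ∧ k ≤ n + 1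
  | .transrev j k => 2 ≤ j ∧ j < k ∧ k ≤ n + 1

/-- Is the operation a prefix reversal? -/
def PrefOp.isRev : PrefOp → Bool
  | .rev _ => true
  | _ => false

/-- Is the operation a prefix transreversal? -/
def PrefOp.isTransrev : PrefOp → Bool
  | .transrev _ _ => true
  | _ => false

/-- Apply a sequence of prefix operations, left to right. -/
def applySeq : List ℕ → List PrefOp → List ℕ
  | π, [] => π
  | π, o :: os => applySeq (o.apply π) os

/-- All operations in the sequence are valid for permutations of `n` elements. -/
def ValidSeq (n : ℕ) (ops : List PrefOp) : Prop :=
  ∀ o ∈ ops, o.Valid n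

/-- `fm π` is `m(π) + 1`, where `m(π)` is the largest index `m` such that
`π_i = i` for all `0 ≤ i ≤ m`; i.e. the length of the longest already-sorted
prefix of `π`. -/
def fm (π : List ℕ) : ℕ :=
  ((List.range π.length).takeWhile (fun i => π.getD i 0 == i)).length

/-- Forward-march prefix reversal: reverses the segment
`π_{m(π)+1}, …, π_{j−1}` in place. -/
def fmPrefixReversal (π : List ℕ) (j : ℕ) : List ℕ :=
  π.take (fm π) ++ ((π.drop (fm π)).take (j - fm π)).reverse ++ π.drop j

/-- Forward-march prefix transposition: cuts the segment
`π_{m(π)+1}, …, π_{j−1}` and pastes it between `π_{k−1}` and `π_k`. -/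
def fmPrefixTransposition (π : List ℕ) (j k : ℕ) : List ℕ :=
  π.take (fm π) ++ (π.drop j).take (k - j) ++
    (π.drop (fm π)).take (j - fm π) ++ π.drop k

/-- A forward-march operation: an FM prefix reversal or an FM prefix
transposition. -/
inductive FMOp
  | rev (j : ℕ)
  | trans (j k : ℕ)

/-- Apply a forward-march operation. -/
def FMOp.apply (π : List ℕ) : FMOp → List ℕ
  | .rev j => fmPrefixReversal π j
  | .trans j k => fmPrefixTransposition π j k

/-- Validity of a forward-march operation on a permutation `π` of `n`
elements: `m(π)+3 ≤ j ≤ n+1` for an FM prefix reversal, and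
`m(π)+2 ≤ j ≤ n`, `j < k ≤ n+1` for an FM prefix transposition
(recall `fm π = m(π) + 1`). -/
def FMOp.Valid (n : ℕ) (π : List ℕ) : FMOp → Prop
  | .rev j => fm π + 2 ≤ j ∧ j ≤ n + 1
  | .trans j k => fm π + 1 ≤ j ∧ j ≤ n ∧ j < k ∧ k ≤ n + 1

/-- Is the forward-march operation an FM prefix reversal? -/
def FMOp.isRev : FMOp → Bool
  | .rev _ => true
  | _ => false

/-- Apply a sequence of forward-march operations, left to right. -/
def applyFMSeq : List ℕ → List FMOp → List ℕ
  | π, [] => π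
  | π, o :: os => applyFMSeq (o.apply π) os

/-- Validity of a sequence of forward-march operations, where each operation
must be valid for the permutation obtained after applying the previous ones. -/
def FMValidSeq (n : ℕ) : List ℕ → List FMOp → Prop
  | _, [] => True
  | π, o :: os => o.Valid n π ∧ FMValidSeq n (o.apply π) os


/-! ### Infrastructure for the proof of `sortRT_upper_bound` -/

/-- breakpoint indicator -/
def bad (a b : ℕ) : ℕ := if a + 1 = b ∨ b + 1 = a then 0 else 1

lemma bad_le (a b : ℕ) : bad a b ≤ 1 := by unfold bad; split <;> omega

lemma bad_comm (a b : ℕ) : bad a b = bad b a := by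
  unfold bad; by_cases h : a + 1 = b ∨ b + 1 = a
  · rw [if_pos h, if_pos (Or.symm h)]
  · rw [if_neg h, if_neg (fun hc => h (Or.symm hc))]

lemma bad1 {a b : ℕ} (h1 : a + 1 ≠ b) (h2 : b + 1 ≠ a) : bad a b = 1 := by
  simp [bad, h1, h2]

lemma bad0 {a b : ℕ} (h : a + 1 = b ∨ b + 1 = a) : bad a b = 0 := by
  simp [bad, h]

/-- count of breakpoints in a list -/
def cnt (l : List ℕ) : ℕ :=
  (l.zip (l.drop 1)).countP (fun p => !(p.1 + 1 == p.2 || p.2 + 1 == p.1))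

@[simp] lemma cnt_nil : cnt [] = 0 := rfl
@[simp] lemma cnt_single (a : ℕ) : cnt [a] = 0 := rfl

lemma cnt_cons₂ (a b : ℕ) (l : List ℕ) : cnt (a :: b :: l) = bad a b + cnt (b :: l) := by
  show List.countP _ ((a, b) :: (b :: l).zip l) = _
  rw [List.countP_cons]
  rw [cnt]
  have hz : (b :: l).drop 1 = l := rfl
  rw [hz]
  rcases Decidable.em (a + 1 = b ∨ b + 1 = a) with h | h
  · have : (!(a + 1 == b || b + 1 == a)) = false := by
      rcases h with h | h <;> simp [h]
    rw [this, if_neg (by simp), bad, if_pos h]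
    omega
  · push_neg at h
    have : (!(a + 1 == b || b + 1 == a)) = true := by
      simp [h.1, h.2]
    rw [this, if_pos rfl, bad, if_neg (by push_neg; exact h)]
    omega

/-- bridge term -/
def brg (u v : List ℕ) : ℕ :=
  match u.getLast?, v.head? with
  | some a, some b => bad a b
  | _, _ => 0

@[simp] lemma brg_nil_left (v : List ℕ) : brg [] v = 0 := by simp [brg]
@[simp] lemma brg_nil_right (u : List ℕ) : brg u [] = 0 := by
  unfold brg; cases u.getLast? <;> rfl

lemma cnt_append (u v : List ℕ) : cnt (u ++ v) = cnt u + cnt v + brg u v := by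
  induction u with
  | nil => simp
  | cons a u ih =>
    cases u with
    | nil =>
      cases v with
      | nil => simp
      | cons b v => simp [cnt_cons₂, brg, Nat.add_comm]
    | cons c u' =>
      have h1 : (a :: c :: u') ++ v = a :: c :: (u' ++ v) := rfl
      rw [h1, cnt_cons₂, cnt_cons₂]
      have hb : brg (a :: c :: u') v = brg (c :: u') v := by
        simp [brg, List.getLast?_cons_cons]
      have h2 : (c :: u') ++ v = c :: (u' ++ v) := rfl
      rw [← h2, ih, hb]; ring

/-- value access with default 0 -/
def V (t : List ℕ) (i : ℕ) : ℕ := t.getD i 0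

lemma V_eq_getElem (t : List ℕ) (i : ℕ) (h : i < t.length) : V t i = t[i] := by
  rw [V, List.getD_eq_getElem?_getD, List.getElem?_eq_getElem h]; rfl

lemma cnt_reverse (l : List ℕ) : cnt l.reverse = cnt l := by
  induction l with
  | nil => rfl
  | cons a l ih =>
    rw [List.reverse_cons, cnt_append, ih, cnt_single]
    cases l with
    | nil => rfl
    | cons b l' =>
      rw [cnt_cons₂]
      have : brg (b :: l').reverse [a] = bad b a := by
        unfold brg
        rw [List.getLast?_reverse]
        rfl
      rw [this, bad_comm]; ring

lemma getLast?_take' {t : List ℕ} {a : ℕ} (h1 : 1 ≤ a) (h2 : a ≤ t.length) :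
    (t.take a).getLast? = some (V t (a-1)) := by
  rw [List.getLast?_eq_getElem?]
  have hl : (t.take a).length = a := by
    rw [List.length_take]; omega
  rw [hl, List.getElem?_take]
  rw [if_pos (by omega)]
  have h3 : a - 1 < t.length := by omega
  rw [List.getElem?_eq_getElem h3, V_eq_getElem t _ h3]

lemma head?_drop' {t : List ℕ} {a : ℕ} (h : a < t.length) :
    (t.drop a).head? = some (V t a) := by
  rw [List.head?_eq_getElem?, List.getElem?_drop]
  rw [Nat.add_zero, List.getElem?_eq_getElem h, V_eq_getElem t _ h]

lemma head?_take' {t : List ℕ} {a : ℕ} (h1 : 1 ≤ a) (h2 : a ≤ t.length) :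
    (t.take a).head? = some (V t 0) := by
  rw [List.head?_eq_getElem?, List.getElem?_take, if_pos (by omega)]
  have h3 : 0 < t.length := by omega
  rw [List.getElem?_eq_getElem h3, V_eq_getElem t _ h3]

lemma brg_eval {u v : List ℕ} {a b : ℕ} (hu : u.getLast? = some a) (hv : v.head? = some b) :
    brg u v = bad a b := by
  unfold brg; rw [hu, hv]

lemma cnt_split {t : List ℕ} {a : ℕ} (h1 : 1 ≤ a) (h2 : a < t.length) :
    cnt t = cnt (t.take a) + cnt (t.drop a) + bad (V t (a-1)) (V t a) := by
  conv_lhs => rw [← List.take_append_drop a t]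
  rw [cnt_append, brg_eval (getLast?_take' h1 (le_of_lt h2)) (head?_drop' h2)]

/-- tail-level prefix reversal -/
def tailRev (a : ℕ) (t : List ℕ) : List ℕ := (t.take a).reverse ++ t.drop a
/-- tail-level prefix transposition -/
def tailTrans (a b : ℕ) (t : List ℕ) : List ℕ :=
  (t.drop a).take (b - a) ++ t.take a ++ t.drop b

lemma cnt_tailRev {t : List ℕ} {a : ℕ} (h1 : 1 ≤ a) (h2 : a < t.length) :
    cnt (tailRev a t) + bad (V t (a-1)) (V t a) = cnt t + bad (V t 0) (V t a) := by
  rw [tailRev, cnt_append, cnt_reverse,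
    brg_eval (by rw [List.getLast?_reverse, head?_take' h1 (le_of_lt h2)]) (head?_drop' h2),
    cnt_split h1 h2]
  ring

lemma V_drop {t : List ℕ} {a i : ℕ} (h : a + i < t.length) :
    V (t.drop a) i = V t (a+i) := by
  have hd : i < (t.drop a).length := by rw [List.length_drop]; omega
  rw [V_eq_getElem _ _ hd, V_eq_getElem _ _ h]
  simp [List.getElem_drop]

lemma V_take {t : List ℕ} {a i : ℕ} (h : i < a) (h2 : i < t.length) :
    V (t.take a) i = V t i := by
  have hd : i < (t.take a).length := by rw [List.length_take]; omega
  rw [V_eq_getElem _ _ hd, V_eq_getElem _ _ h2]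
  simp [List.getElem_take]

lemma cnt_tailTrans {t : List ℕ} {a b : ℕ} (h1 : 1 ≤ a) (h2 : a < b) (h3 : b < t.length) :
    cnt (tailTrans a b t) + bad (V t (a-1)) (V t a) + bad (V t (b-1)) (V t b)
      = cnt t + bad (V t (b-1)) (V t 0) + bad (V t (a-1)) (V t b) := by
  have hlastB : ((t.drop a).take (b-a)).getLast? = some (V t (b-1)) := by
    rw [getLast?_take' (by omega) (by rw [List.length_drop]; omega)]
    rw [V_drop (show a + (b-a-1) < t.length by omega)]
    have e : a + (b-a-1) = b - 1 := by omega
    rw [e]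
  have hheadB : ((t.drop a).take (b-a)).head? = some (V t a) := by
    rw [head?_take' (by omega) (by rw [List.length_drop]; omega)]
    rw [V_drop (show a + 0 < t.length by omega), Nat.add_zero]
  have hsplit : cnt t = cnt (t.take a) + cnt ((t.drop a).take (b-a)) + cnt (t.drop b)
      + bad (V t (a-1)) (V t a) + bad (V t (b-1)) (V t b) := by
    rw [cnt_split h1 (by omega)]
    have : cnt (t.drop a) = cnt ((t.drop a).take (b-a)) + cnt ((t.drop a).drop (b-a))
        + bad (V (t.drop a) (b-a-1)) (V (t.drop a) (b-a)) := by
      exact cnt_split (by omega) (by rw [List.length_drop]; omega)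
    rw [this, List.drop_drop]
    rw [V_drop (show a + (b-a-1) < t.length by omega), V_drop (show a + (b-a) < t.length by omega)]
    have e1 : a + (b - a - 1) = b - 1 := by omega
    have e2 : a + (b - a) = b := by omega
    rw [e1, e2]
    ring
  have hBA : ((t.drop a).take (b-a) ++ t.take a).getLast? = some (V t (a-1)) := by
    rw [List.getLast?_append, getLast?_take' h1 (by omega)]; rfl
  rw [tailTrans, cnt_append, cnt_append]
  rw [brg_eval hlastB (head?_take' h1 (by omega)),
      brg_eval hBA (head?_drop' h3)]
  rw [hsplit]
  ring

/-- TInvariant on the tail of the permutation. -/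
def TInv (n : ℕ) (t : List ℕ) : Prop :=
  t.Perm (List.range' 1 (n+1)) ∧ t.getLast? = some (n+1)

lemma TInv.len {n : ℕ} {t : List ℕ} (hI : TInv n t) : t.length = n + 1 := by
  have := hI.1.length_eq
  simpa using this

lemma TInv.nodup {n : ℕ} {t : List ℕ} (hI : TInv n t) : t.Nodup :=
  hI.1.symm.nodup (List.nodup_range' (s := 1) (n := n+1))

lemma TInv.vmem {n : ℕ} {t : List ℕ} (hI : TInv n t) {i : ℕ} (h : i < t.length) :
    1 ≤ V t i ∧ V t i ≤ n + 1 := by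
  rw [V_eq_getElem t i h]
  have : t[i] ∈ t := List.getElem_mem h
  have := hI.1.mem_iff.mp this
  rw [List.mem_range'_1] at this
  omega

lemma TInv.inj {n : ℕ} {t : List ℕ} (hI : TInv n t) {i j : ℕ}
    (hi : i < t.length) (hj : j < t.length) (h : V t i = V t j) : i = j := by
  rw [V_eq_getElem t i hi, V_eq_getElem t j hj] at h
  exact (hI.nodup.getElem_inj_iff).mp h

lemma TInv.exists_pos {n : ℕ} {t : List ℕ} (hI : TInv n t) {v : ℕ}
    (h1 : 1 ≤ v) (h2 : v ≤ n + 1) : ∃ i, i < t.length ∧ V t i = v := by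
  have hv : v ∈ t := hI.1.mem_iff.mpr (List.mem_range'_1.mpr ⟨h1, by omega⟩)
  obtain ⟨i, hi, he⟩ := List.mem_iff_getElem.mp hv
  exact ⟨i, hi, by rw [V_eq_getElem t i hi]; exact he⟩

lemma TInv.last {n : ℕ} {t : List ℕ} (hI : TInv n t) : V t (t.length - 1) = n + 1 := by
  have hne : t ≠ [] := by
    intro h; rw [h] at hI; exact absurd hI.2 (by simp)
  have := hI.2
  rw [List.getLast?_eq_getElem? ] at this
  have hlt : t.length - 1 < t.length := by
    cases t with
    | nil => exact absurd rfl hne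
    | cons a l => simp
  rw [List.getElem?_eq_getElem hlt] at this
  rw [V_eq_getElem t _ hlt]
  exact Option.some_injective _ this

lemma getLast?_drop' {t : List ℕ} {a : ℕ} (h : a < t.length) :
    (t.drop a).getLast? = t.getLast? := by
  conv_rhs => rw [← List.take_append_drop a t]
  rw [List.getLast?_append]
  have hne : t.drop a ≠ [] := by
    intro hc
    have := congrArg List.length hc
    rw [List.length_drop] at this
    simp at this; omega
  cases hd : (t.drop a).getLast? with
  | none => exact absurd (List.getLast?_eq_none_iff.mp hd) hne
  | some c => rfl

lemma tinv_tailRev {n : ℕ} {t : List ℕ} {a : ℕ} (hI : TInv n t)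
    (h2 : a < t.length) : TInv n (tailRev a t) := by
  constructor
  · refine List.Perm.trans ?_ hI.1
    have hp : ((t.take a).reverse ++ t.drop a).Perm (t.take a ++ t.drop a) :=
      List.Perm.append_right _ (List.reverse_perm _)
    rw [List.take_append_drop] at hp
    exact hp
  · show ((t.take a).reverse ++ t.drop a).getLast? = some (n+1)
    rw [List.getLast?_append, getLast?_drop' h2, hI.2]; rfl

lemma tinv_tailTrans {n : ℕ} {t : List ℕ} {a b : ℕ} (hI : TInv n t)
    (hab : a ≤ b) (h2 : b < t.length) : TInv n (tailTrans a b t) := by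
  constructor
  · refine List.Perm.trans ?_ hI.1
    have hd : (t.drop a).drop (b - a) = t.drop b := by
      rw [List.drop_drop]; congr 1; omega
    have hp : ((t.drop a).take (b-a) ++ t.take a ++ t.drop b).Perm
        (t.take a ++ (t.drop a).take (b-a) ++ t.drop b) :=
      List.Perm.append_right _ List.perm_append_comm
    have he : t.take a ++ (t.drop a).take (b-a) ++ t.drop b = t := by
      rw [List.append_assoc, ← hd, List.take_append_drop, List.take_append_drop]
    rw [he] at hp
    exact hp
  · show ((t.drop a).take (b-a) ++ t.take a ++ t.drop b).getLast? = some (n+1)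
    rw [List.append_assoc, List.getLast?_append, List.getLast?_append, getLast?_drop' h2, hI.2]; rfl

lemma V_tailRev {t : List ℕ} {a i : ℕ} (hi : i < a) (ha : a ≤ t.length) :
    V (tailRev a t) i = V t (a - 1 - i) := by
  have hlt : a - 1 - i < t.length := by omega
  have hlen : (t.take a).reverse.length = a := by
    rw [List.length_reverse, List.length_take]; omega
  have hi' : i < (tailRev a t).length := by
    rw [tailRev, List.length_append, hlen]; omega
  rw [V_eq_getElem _ _ hi', V_eq_getElem _ _ hlt]
  simp only [tailRev]
  rw [List.getElem_append_left (by rw [hlen]; exact hi)]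
  rw [List.getElem_reverse]
  have e : (t.take a).length - 1 - i = a - 1 - i := by
    rw [List.length_take]; omega
  simp only [e]
  rw [List.getElem_take]

/-- apply a prefix reversal on `0 :: t` -/
lemma apply_rev (t : List ℕ) (a : ℕ) :
    (PrefOp.rev (a+1)).apply (0 :: t) = 0 :: tailRev a t := by
  show prefixReversal (0 :: t) (a+1) = _
  simp [prefixReversal, tailRev]

lemma apply_trans (t : List ℕ) (a b : ℕ) :
    (PrefOp.trans (a+1) (b+1)).apply (0 :: t) = 0 :: tailTrans a b t := by
  show prefixTransposition (0 :: t) (a+1) (b+1) = _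
  have e : b + 1 - (a + 1) = b - a := by omega
  simp [prefixTransposition, tailTrans, e]

lemma cnt_range' (s k : ℕ) : cnt (List.range' s k) = 0 := by
  induction k generalizing s with
  | zero => rfl
  | succ k ih =>
    cases k with
    | zero => rfl
    | succ k' =>
      rw [List.range'_succ, List.range'_succ]
      rw [cnt_cons₂, ← List.range'_succ]
      rw [bad0 (Or.inl rfl), ih]

lemma chain_ascending : ∀ (l : List ℕ) (M : ℕ), l.Nodup → cnt l = 0 →
    l.getLast? = some M → (∀ v ∈ l, v ≤ M) →
    l.length ≤ M + 1 ∧ l = List.range' (M + 1 - l.length) l.length := by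
  intro l
  induction l with
  | nil => intro M _ _ h _; simp at h
  | cons a l ih =>
    intro M hnd hcnt hlast hmem
    cases l with
    | nil =>
      have : a = M := by
        simpa using hlast
      subst this
      refine ⟨by simp, ?_⟩
      simp
    | cons b l' =>
      rw [cnt_cons₂] at hcnt
      have hbad : bad a b = 0 := by omega
      have hcnt' : cnt (b :: l') = 0 := by omega
      have hlast' : (b :: l').getLast? = some M := by
        rw [← hlast, List.getLast?_cons_cons]
      have hmem' : ∀ v ∈ b :: l', v ≤ M := fun v hv => hmem v (List.mem_cons_of_mem a hv)
      obtain ⟨hle, heq⟩ := ih M (List.Nodup.of_cons hnd) hcnt' hlast' hmem'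
      have hlenl : (b :: l').length = l'.length + 1 := rfl
      have hb : b = M - l'.length := by
        have h2 := congrArg List.head? heq
        rw [hlenl, List.range'_succ] at h2
        simp at h2
        omega
      have hor : a + 1 = b ∨ b + 1 = a := by
        by_contra hc
        push_neg at hc
        rw [bad1 hc.1 hc.2] at hbad
        omega
      have haM : a ≤ M := hmem a (List.mem_cons_self)
      have hanotin : a ∉ (b :: l') := by
        intro hc
        exact (List.nodup_cons.mp hnd).1 hc
      rcases hor with h | h
      · -- ascending: a + 1 = b
        have hlen2 : l'.length + 1 ≤ M := by
          -- since b = M + 1 - (l'.length+1) and a + 1 = b, a ≥ 0 gives slack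
          -- b ≥ 1 since b = a + 1
          omega
        constructor
        · simp; omega
        · have e1 : (a :: b :: l').length = l'.length + 2 := rfl
          rw [e1]
          have e2 : M + 1 - (l'.length + 2) = a := by omega
          rw [e2]
          have e3 : List.range' a (l'.length + 2) = a :: List.range' (a+1) (l'.length + 1) := by
            rw [List.range'_succ]
          rw [e3]
          congr 1
          rw [heq, hlenl]
          congr 1
          omega
      · -- descending: b + 1 = a, derive contradiction
        exfalso
        have hmemrange : a ∈ List.range' (M - l'.length) (l'.length + 1) := by
          rw [List.mem_range'_1]
          constructor
          · omega
          · -- a < b + (l'.length + 1), i.e. l'.length ≥ 1 case; if l' = [] then b = M and a = b+1 > M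
            cases l' with
            | nil =>
              exfalso
              have : b = M := by simpa using hlast'
              omega
            | cons c l'' =>
              have : (c :: l'').length = l''.length + 1 := rfl
              omega
        have : a ∈ b :: l' := by
          rw [heq, hlenl]
          have e : M + 1 - (l'.length + 1) = M - l'.length := by omega
          rw [e]
          exact hmemrange
        exact hanotin this

lemma TInv.sorted_of_cnt_zero {n : ℕ} {t : List ℕ} (hI : TInv n t) (h : cnt t = 0) :
    t = List.range' 1 (n+1) := by
  have hmem : ∀ v ∈ t, v ≤ n + 1 := by
    intro v hv
    have := hI.1.mem_iff.mp hv
    rw [List.mem_range'_1] at this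
    omega
  obtain ⟨_, heq⟩ := chain_ascending t (n+1) hI.nodup h hI.2 hmem
  rw [hI.len] at heq
  rw [heq]
  congr 1
  omega

lemma V_out {t : List ℕ} {i : ℕ} (h : t.length ≤ i) : V t i = 0 :=
  List.getD_eq_default t 0 h

/-- Main workhorse: if the first element of the tail is at least 2, there is a
single valid prefix operation strictly decreasing the breakpoint count. -/
lemma stepA {n : ℕ} {t : List ℕ} (hI : TInv n t) (hx : 2 ≤ V t 0) :
    ∃ (o : PrefOp) (t' : List ℕ), o.Valid n ∧ o.isTransrev = false ∧
      o.apply (0 :: t) = 0 :: t' ∧ TInv n t' ∧ cnt t' + 1 ≤ cnt t := by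
  have hL : t.length = n + 1 := hI.len
  have h0 : 0 < t.length := by
    by_contra h
    have : t = [] := List.length_eq_zero_iff.mp (by omega)
    rw [this] at hx
    simp [V] at hx
  have hxn : V t 0 ≤ n + 1 := (hI.vmem h0).2
  have h2L : 2 ≤ t.length := by omega
  by_cases h1 : V t 1 = V t 0 - 1
  · -- A3 : descending first run
    have hxn' : V t 0 ≤ n := by
      by_contra h
      push_neg at h
      have he : V t 0 = V t (t.length - 1) := by rw [hI.last]; omega
      have := hI.inj h0 (by omega) he
      omega
    have hwit : ∃ i, V t i ≠ V t 0 - i :=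
      ⟨V t 0, by have := (hI.vmem (show V t 0 < t.length by omega)).1; omega⟩
    set r := Nat.find hwit with hrdef
    have hr : V t r ≠ V t 0 - r := Nat.find_spec hwit
    have hltr : ∀ i < r, V t i = V t 0 - i := fun i hi => not_not.mp (Nat.find_min hwit hi)
    have hr0 : 0 < r := by
      rcases Nat.eq_zero_or_pos r with h | h
      · exfalso; apply hr; rw [h]; omega
      · exact h
    have hr1 : 1 < r := by
      rcases Nat.lt_or_ge 1 r with h | h
      · exact h
      · exfalso; apply hr
        have : r = 1 := by omega
        rw [this]; exact h1
    have hrx : r ≤ V t 0 := Nat.find_le (by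
      have := (hI.vmem (show V t 0 < t.length by omega)).1; omega)
    have hrL : r < t.length := by omega
    obtain ⟨q0, hq0L, hq0⟩ := hI.exists_pos (v := V t 0 + 1) (by omega) (by omega)
    have hq00 : q0 ≠ 0 := by intro h; rw [h] at hq0; omega
    have hq01 : q0 ≠ 1 := by intro h; rw [h] at hq0; omega
    have hq0r : r ≤ q0 := by
      by_contra h
      push_neg at h
      have := hltr q0 h
      omega
    by_cases hq : V t (q0 - 1) = V t 0 + 2
    · -- A3b : prefix transposition
      have hq0r' : r < q0 := by
        rcases eq_or_lt_of_le hq0r with h | h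
        · exfalso
          have : V t (q0 - 1) = V t 0 - (q0 - 1) := hltr (q0 - 1) (by omega)
          omega
        · exact h
      have hq0L2 : q0 < t.length - 1 := by
        by_contra h
        push_neg at h
        have hq0e : q0 = t.length - 1 := by omega
        have : V t q0 = n + 1 := by rw [hq0e]; exact hI.last
        have hxv : V t 0 = n := by omega
        have := (hI.vmem (show q0 - 1 < t.length by omega)).2
        omega
      refine ⟨PrefOp.trans (r+1) (q0+2), tailTrans r (q0+1) t, ⟨by omega, by omega, by omega⟩,
        rfl, apply_trans t r (q0+1), tinv_tailTrans hI (by omega) (by omega), ?_⟩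
      have key := cnt_tailTrans (t := t) (a := r) (b := q0 + 1) (by omega) (by omega) (by omega)
      simp only [Nat.add_sub_cancel] at key
      have hVr1 : V t (r-1) = V t 0 - (r-1) := hltr (r-1) (by omega)
      have hVr2 : V t (r-2) = V t 0 - (r-2) := hltr (r-2) (by omega)
      have b1 : bad (V t (r-1)) (V t r) = 1 := by
        apply bad1
        · intro h
          have he : V t r = V t (r-2) := by omega
          have := hI.inj (by omega) (show r - 2 < t.length by omega) he
          omega
        · intro h
          apply hr; omega
      have b2 : bad (V t q0) (V t (q0+1)) = 1 := by
        apply bad1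
        · intro h
          have he : V t (q0+1) = V t (q0-1) := by omega
          have := hI.inj (by omega) (show q0 - 1 < t.length by omega) he
          omega
        · intro h
          have he : V t (q0+1) = V t 0 := by omega
          have := hI.inj (by omega) h0 he
          omega
      have b3 : bad (V t q0) (V t 0) = 0 := bad0 (Or.inr (by omega))
      have b4 := bad_le (V t (r-1)) (V t (q0+1))
      omega
    · -- A3a : prefix reversal at q0
      have hq02 : 2 ≤ q0 := by omega
      refine ⟨PrefOp.rev (q0+1), tailRev q0 t, ⟨by omega, by omega⟩,
        rfl, apply_rev t q0, tinv_tailRev hI (by omega), ?_⟩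
      have key := cnt_tailRev (t := t) (a := q0) (by omega) (by omega)
      have b1 : bad (V t (q0-1)) (V t q0) = 1 := by
        apply bad1
        · intro h
          have he : V t (q0-1) = V t 0 := by omega
          have := hI.inj (show q0 - 1 < t.length by omega) h0 he
          omega
        · intro h
          apply hq; omega
      have b2 : bad (V t 0) (V t q0) = 0 := bad0 (Or.inl (by omega))
      omega
  · -- A1/A2 : x - 1 is not in second position
    obtain ⟨p0, hp0L, hp0⟩ := hI.exists_pos (v := V t 0 - 1) (by omega) (by omega)
    have hp00 : p0 ≠ 0 := by intro h; rw [h] at hp0; omega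
    have hp01 : p0 ≠ 1 := by intro h; rw [h] at hp0; exact h1 hp0
    have hp0L2 : p0 < t.length - 1 := by
      by_contra h
      push_neg at h
      have hp0e : p0 = t.length - 1 := by omega
      have : V t p0 = n + 1 := by rw [hp0e]; exact hI.last
      omega
    by_cases hA : V t (p0 - 1) = V t 0 - 2
    · -- A2 : prefix transposition
      have hwit : ∃ i, V t i ≠ V t 0 + i :=
        ⟨t.length, by rw [V_out (le_refl _)]; omega⟩
      set r := Nat.find hwit with hrdef
      have hr : V t r ≠ V t 0 + r := Nat.find_spec hwit
      have hltr : ∀ i < r, V t i = V t 0 + i := fun i hi => not_not.mp (Nat.find_min hwit hi)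
      have hr0 : 0 < r := by
        rcases Nat.eq_zero_or_pos r with h | h
        · exfalso; apply hr; rw [h]; omega
        · exact h
      have hrL : r < t.length := by
        by_contra h
        push_neg at h
        have := hltr (t.length - 1) (by omega)
        rw [hI.last] at this
        omega
      have hrp0 : r ≤ p0 := by
        by_contra h
        push_neg at h
        have := hltr p0 h
        omega
      refine ⟨PrefOp.trans (r+1) (p0+2), tailTrans r (p0+1) t, ⟨by omega, by omega, by omega⟩,
        rfl, apply_trans t r (p0+1), tinv_tailTrans hI (by omega) (by omega), ?_⟩
      have key := cnt_tailTrans (t := t) (a := r) (b := p0 + 1) (by omega) (by omega) (by omega)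
      simp only [Nat.add_sub_cancel] at key
      have hVr1 : V t (r-1) = V t 0 + (r-1) := hltr (r-1) (by omega)
      have b1 : bad (V t (r-1)) (V t r) = 1 := by
        apply bad1
        · intro h
          apply hr; omega
        · intro h
          rcases Nat.lt_or_ge r 2 with h2 | h2
          · have hre : r = 1 := by omega
            apply h1
            rw [← hre]
            omega
          · have he : V t r = V t (r-2) := by
              rw [hltr (r-2) (by omega)]; omega
            have := hI.inj (by omega) (show r - 2 < t.length by omega) he
            omega
      have b2 : bad (V t p0) (V t (p0+1)) = 1 := by
        apply bad1
        · intro h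
          have he : V t (p0+1) = V t 0 := by omega
          have := hI.inj (by omega) h0 he
          omega
        · intro h
          have he : V t (p0+1) = V t (p0-1) := by omega
          have := hI.inj (by omega) (show p0 - 1 < t.length by omega) he
          omega
      have b3 : bad (V t p0) (V t 0) = 0 := bad0 (Or.inl (by omega))
      have b4 := bad_le (V t (r-1)) (V t (p0+1))
      omega
    · -- A1 : prefix reversal at p0
      refine ⟨PrefOp.rev (p0+1), tailRev p0 t, ⟨by omega, by omega⟩,
        rfl, apply_rev t p0, tinv_tailRev hI (by omega), ?_⟩
      have key := cnt_tailRev (t := t) (a := p0) (by omega) (by omega)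
      have b1 : bad (V t (p0-1)) (V t p0) = 1 := by
        apply bad1
        · intro h
          apply hA; omega
        · intro h
          have he : V t (p0-1) = V t 0 := by omega
          have := hI.inj (show p0 - 1 < t.length by omega) h0 he
          omega
      have b2 : bad (V t 0) (V t p0) = 0 := bad0 (Or.inr (by omega))
      omega

/-- The case where the tail starts with `1`: either one operation decreasing the
breakpoint count, or three operations decreasing it by two. -/
lemma stepC {n : ℕ} {t : List ℕ} (hI : TInv n t) (hx : V t 0 = 1) (hk : 1 ≤ cnt t) :
    (∃ (o : PrefOp) (t' : List ℕ), o.Valid n ∧ o.isTransrev = false ∧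
      o.apply (0 :: t) = 0 :: t' ∧ TInv n t' ∧ cnt t' + 1 ≤ cnt t) ∨
    (∃ (o1 o2 o3 : PrefOp) (t1 t2 t3 : List ℕ),
      o1.Valid n ∧ o2.Valid n ∧ o3.Valid n ∧
      o1.isTransrev = false ∧ o2.isTransrev = false ∧ o3.isTransrev = false ∧
      o1.apply (0 :: t) = 0 :: t1 ∧ o2.apply (0 :: t1) = 0 :: t2 ∧
      o3.apply (0 :: t2) = 0 :: t3 ∧ TInv n t3 ∧ cnt t3 + 2 ≤ cnt t) := by
  have hL : t.length = n + 1 := hI.len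
  have h0 : 0 < t.length := by omega
  have hwit : ∃ i, V t i ≠ i + 1 :=
    ⟨t.length, by rw [V_out (le_refl _)]; omega⟩
  set m := Nat.find hwit with hmdef
  have hm : V t m ≠ m + 1 := Nat.find_spec hwit
  have hltm : ∀ i < m, V t i = i + 1 := fun i hi => not_not.mp (Nat.find_min hwit hi)
  have hm0 : 0 < m := by
    rcases Nat.eq_zero_or_pos m with h | h
    · exfalso; apply hm; rw [h]; omega
    · exact h
  have hmL : m < t.length := by
    by_contra h
    push_neg at h
    have ht : t = List.range' 1 t.length := by
      apply List.ext_getElem (by simp)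
      intro i h1 h2
      have hv := hltm i (by omega)
      rw [V_eq_getElem t i h1] at hv
      rw [hv]
      rw [List.getElem_range']
      omega
    rw [ht, cnt_range'] at hk
    omega
  have hz1 : 1 ≤ V t m := (hI.vmem hmL).1
  have hz2 : m + 2 ≤ V t m := by
    have hge : m + 1 ≤ V t m := by
      by_contra h
      push_neg at h
      have he : V t (V t m - 1) = V t m := by
        rw [hltm (V t m - 1) (by omega)]; omega
      have := hI.inj (show V t m - 1 < t.length by omega) hmL he
      omega
    omega
  have hmn : m + 2 ≤ n + 1 := le_trans hz2 (hI.vmem hmL).2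
  obtain ⟨r1, hr1L, hr1⟩ := hI.exists_pos (v := m+1) (by omega) (by omega)
  have hr1m : m < r1 := by
    by_contra h
    push_neg at h
    rcases Nat.lt_or_ge r1 m with h2 | h2
    · have := hltm r1 h2
      have : r1 = m := by omega
      omega
    · have : r1 = m := by omega
      rw [this] at hr1
      exact hm hr1
  have hr1L2 : r1 < t.length - 1 := by
    by_contra h
    push_neg at h
    have hr1e : r1 = t.length - 1 := by omega
    have : V t r1 = n + 1 := by rw [hr1e]; exact hI.last
    omega
  by_cases hC : V t (r1 - 1) = m + 2
  · -- C-ii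
    have hw1 : 1 ≤ V t (r1+1) := (hI.vmem (show r1 + 1 < t.length by omega)).1
    have bw : bad (V t r1) (V t (r1+1)) = 1 := by
      apply bad1
      · intro h
        have he : V t (r1+1) = V t (r1-1) := by omega
        have := hI.inj (by omega) (show r1 - 1 < t.length by omega) he
        omega
      · intro h
        have hVm1 : V t (m-1) = m := by
          have := hltm (m-1) (by omega); omega
        have he : V t (r1+1) = V t (m-1) := by omega
        have := hI.inj (by omega) (show m - 1 < t.length by omega) he
        omega
    have key1 := cnt_tailRev (t := t) (a := r1+1) (by omega) (by omega)
    simp only [Nat.add_sub_cancel] at key1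
    by_cases hw : V t (r1+1) = 2
    · -- single reversal suffices
      left
      refine ⟨PrefOp.rev (r1+2), tailRev (r1+1) t, ⟨by omega, by omega⟩,
        rfl, apply_rev t (r1+1), tinv_tailRev hI (by omega), ?_⟩
      have b2 : bad (V t 0) (V t (r1+1)) = 0 := bad0 (Or.inl (by omega))
      omega
    · -- three operations
      right
      have hI1 : TInv n (tailRev (r1+1) t) := tinv_tailRev hI (by omega)
      set t1 := tailRev (r1+1) t with ht1def
      have b2 : bad (V t 0) (V t (r1+1)) = 1 := by
        apply bad1
        · intro h; omega
        · intro h; omega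
      have hcnt1 : cnt t1 = cnt t := by omega
      have hlen1 : t1.length = t.length := by rw [hI1.len, hL]
      set p := r1 + 1 - m with hpdef
      have hV10 : V t1 0 = m + 1 := by
        rw [ht1def, V_tailRev (by omega) (by omega)]
        have e : r1 + 1 - 1 - 0 = r1 := by omega
        rw [e]; exact hr1
      have hV1p1 : V t1 (p-1) = V t m := by
        rw [ht1def, V_tailRev (by omega) (by omega)]
        have e : r1 + 1 - 1 - (p - 1) = m := by omega
        rw [e]
      have hV1p : V t1 p = m := by
        rw [ht1def, V_tailRev (by omega) (by omega)]
        have e : r1 + 1 - 1 - p = m - 1 := by omega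
        rw [e]
        have := hltm (m-1) (by omega); omega
      have key2 := cnt_tailRev (t := t1) (a := p) (by omega) (by omega)
      have b3 : bad (V t1 (p-1)) (V t1 p) = 1 := by
        apply bad1
        · intro h; rw [hV1p1, hV1p] at h; omega
        · intro h; rw [hV1p1, hV1p] at h; omega
      have b4 : bad (V t1 0) (V t1 p) = 0 := by
        rw [hV10, hV1p]; exact bad0 (Or.inr rfl)
      have hI2 : TInv n (tailRev p t1) := tinv_tailRev hI1 (by omega)
      set t2 := tailRev p t1 with ht2def
      have hcnt2 : cnt t2 + 1 = cnt t := by omega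
      have hV20 : V t2 0 = V t m := by
        rw [ht2def, V_tailRev (by omega) (by omega)]
        have e : p - 1 - 0 = p - 1 := by omega
        rw [e]; exact hV1p1
      obtain ⟨o3, t3, hv3, htr3, happ3, hI3, hc3⟩ := stepA hI2 (by omega)
      exact ⟨PrefOp.rev (r1+2), PrefOp.rev (p+1), o3, t1, t2, t3,
        ⟨by omega, by omega⟩, ⟨by omega, by omega⟩, hv3,
        rfl, rfl, htr3,
        apply_rev t (r1+1), apply_rev t1 p, happ3, hI3, by omega⟩
  · -- C-i : single transposition
    left
    refine ⟨PrefOp.trans (m+1) (r1+1), tailTrans m r1 t, ⟨by omega, by omega, by omega⟩,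
      rfl, apply_trans t m r1, tinv_tailTrans hI (by omega) (by omega), ?_⟩
    have key := cnt_tailTrans (t := t) (a := m) (b := r1) (by omega) (by omega) (by omega)
    have hVm1 : V t (m-1) = m := by
      have := hltm (m-1) (by omega); omega
    have b1 : bad (V t (m-1)) (V t m) = 1 := by
      apply bad1
      · intro h; rw [hVm1] at h; exact hm (by omega)
      · intro h; rw [hVm1] at h; omega
    have b2 : bad (V t (r1-1)) (V t r1) = 1 := by
      apply bad1
      · intro h
        have he : V t (r1-1) = V t (m-1) := by omega
        have := hI.inj (show r1 - 1 < t.length by omega) (show m - 1 < t.length by omega) he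
        omega
      · intro h
        apply hC; omega
    have b3 := bad_le (V t (r1-1)) (V t 0)
    have b4 : bad (V t (m-1)) (V t r1) = 0 := by
      rw [hVm1, hr1]; exact bad0 (Or.inl rfl)
    omega

lemma applySeq_cons (π : List ℕ) (o : PrefOp) (os : List PrefOp) :
    applySeq π (o :: os) = applySeq (o.apply π) os := rfl

lemma range_eq_cons (n : ℕ) : List.range (n + 2) = 0 :: List.range' 1 (n + 1) := by
  rw [List.range_eq_range']
  rfl

lemma sortTail (n : ℕ) : ∀ (k : ℕ) (t : List ℕ), TInv n t → cnt t ≤ k →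
    ∃ ops : List PrefOp, ValidSeq n ops ∧ (∀ o ∈ ops, o.isTransrev = false) ∧
      applySeq (0 :: t) ops = List.range (n + 2) ∧ ops.length ≤ 3 * cnt t / 2 := by
  intro k
  induction k with
  | zero =>
    intro t hI hc
    refine ⟨[], fun o h => absurd h (List.not_mem_nil),
      fun o h => absurd h (List.not_mem_nil), ?_, by simp⟩
    show (0 :: t : List ℕ) = _
    rw [hI.sorted_of_cnt_zero (by omega), range_eq_cons]
  | succ k ih =>
    intro t hI hc
    by_cases hc0 : cnt t = 0
    · refine ⟨[], fun o h => absurd h (List.not_mem_nil),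
        fun o h => absurd h (List.not_mem_nil), ?_, by simp⟩
      show (0 :: t : List ℕ) = _
      rw [hI.sorted_of_cnt_zero hc0, range_eq_cons]
    · have hk1 : 1 ≤ cnt t := by omega
      have hL : t.length = n + 1 := hI.len
      have h0 : 0 < t.length := by omega
      have hx1 : 1 ≤ V t 0 := (hI.vmem h0).1
      by_cases hx : V t 0 = 1
      · rcases stepC hI hx hk1 with
          ⟨o, t', hv, htr, happ, hI', hcnt'⟩ |
          ⟨o1, o2, o3, t1, t2, t3, hv1, hv2, hv3, htr1, htr2, htr3,
            happ1, happ2, happ3, hI3, hcnt3⟩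
        · obtain ⟨ops, hvs, htrs, happs, hlen⟩ := ih t' hI' (by omega)
          refine ⟨o :: ops, ?_, ?_, ?_, ?_⟩
          · intro o' ho'
            rcases List.mem_cons.mp ho' with h | h
            · rw [h]; exact hv
            · exact hvs o' h
          · intro o' ho'
            rcases List.mem_cons.mp ho' with h | h
            · rw [h]; exact htr
            · exact htrs o' h
          · rw [applySeq_cons, happ]; exact happs
          · rw [List.length_cons]; omega
        · obtain ⟨ops, hvs, htrs, happs, hlen⟩ := ih t3 hI3 (by omega)
          refine ⟨o1 :: o2 :: o3 :: ops, ?_, ?_, ?_, ?_⟩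
          · intro o' ho'
            rcases List.mem_cons.mp ho' with h | ho'
            · rw [h]; exact hv1
            rcases List.mem_cons.mp ho' with h | ho'
            · rw [h]; exact hv2
            rcases List.mem_cons.mp ho' with h | ho'
            · rw [h]; exact hv3
            · exact hvs o' ho'
          · intro o' ho'
            rcases List.mem_cons.mp ho' with h | ho'
            · rw [h]; exact htr1
            rcases List.mem_cons.mp ho' with h | ho'
            · rw [h]; exact htr2
            rcases List.mem_cons.mp ho' with h | ho'
            · rw [h]; exact htr3
            · exact htrs o' ho'
          · rw [applySeq_cons, happ1, applySeq_cons, happ2, applySeq_cons, happ3]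
            exact happs
          · simp only [List.length_cons]; omega
      · have hx2 : 2 ≤ V t 0 := by omega
        obtain ⟨o, t', hv, htr, happ, hI', hcnt'⟩ := stepA hI hx2
        obtain ⟨ops, hvs, htrs, happs, hlen⟩ := ih t' hI' (by omega)
        refine ⟨o :: ops, ?_, ?_, ?_, ?_⟩
        · intro o' ho'
          rcases List.mem_cons.mp ho' with h | h
          · rw [h]; exact hv
          · exact hvs o' h
        · intro o' ho'
          rcases List.mem_cons.mp ho' with h | h
          · rw [h]; exact htr
          · exact htrs o' h
        · rw [applySeq_cons, happ]; exact happs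
        · rw [List.length_cons]; omega

/-- every permutation can be sorted by at most `⌊3(b(π)−1)/2⌋`
prefix reversals and prefix transpositions. -/
theorem sortRT_upper_bound
    (n : ℕ) (π : List ℕ) (hπ : IsPerm n π) :
    ∃ ops : List PrefOp, ValidSeq n ops ∧
      (∀ o ∈ ops, o.isTransrev = false) ∧
      applySeq π ops = List.range (n + 2) ∧
      ops.length ≤ 3 * (bp π - 1) / 2 := by
  obtain ⟨hperm, h0, hl⟩ := hπ
  have hlen : π.length = n + 2 := by
    rw [hperm.length_eq, List.length_range]
  cases π with
  | nil => simp at hlen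
  | cons a t =>
    have ha : a = 0 := h0
    subst ha
    have hlent : t.length = n + 1 := by
      simp at hlen; omega
    have hI : TInv n t := by
      constructor
      · have := hperm
        rw [range_eq_cons] at this
        exact this.cons_inv
      · have hl' : V t n = n + 1 := by
          have : (0 :: t).getD (n+1) 0 = t.getD n 0 := rfl
          rw [this] at hl
          exact hl
        rw [List.getLast?_eq_getElem?, hlent]
        have hn : n < t.length := by omega
        rw [List.getElem?_eq_getElem (by omega)]
        rw [V_eq_getElem t n hn] at hl'
        simp [hl']
    have hbp : bp (0 :: t) = 1 + cnt t := rfl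
    obtain ⟨ops, hvs, htrs, happs, hlen'⟩ := sortTail n (cnt t) t hI (le_refl _)
    exact ⟨ops, hvs, htrs, happs, by rw [hbp]; simpa using hlen'⟩
end

section
/- For every permutation π = [π_0, π_1, …, π_{n+1}] and every prefix transreversal βτ = βτ(1,j,k) with 2 ≤ j < k ≤ n+1, the number of breakpoints decreases by at most two, i.e., b(π) − b(π·βτ) ≤ 2. -/
/-- The breakpoint predicate. -/
def Pb : ℕ × ℕ → Bool := fun p => !(p.1 + 1 == p.2 || p.2 + 1 == p.1)

/-- Count of adjacent-pair breakpoints in a list. -/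
def cc (L : List ℕ) : ℕ := (L.zip (L.drop 1)).countP Pb

lemma cc_nil : cc [] = 0 := rfl

lemma cc_single (x : ℕ) : cc [x] = 0 := rfl

lemma cc_cons_cons (x y : ℕ) (L : List ℕ) :
    cc (x :: y :: L) = (if Pb (x, y) then 1 else 0) + cc (y :: L) := by
  simp only [cc, List.drop_succ_cons, List.drop_zero, List.zip_cons_cons,
    List.countP_cons]
  omega

lemma cc_cons_le (x : ℕ) (L : List ℕ) : cc (x :: L) ≤ cc L + 1 := by
  cases L with
  | nil => simp [cc_single, cc_nil]
  | cons y L =>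
    rw [cc_cons_cons]
    split <;> omega

lemma le_cc_cons (x : ℕ) (L : List ℕ) : cc L ≤ cc (x :: L) := by
  cases L with
  | nil => simp [cc_single, cc_nil]
  | cons y L =>
    rw [cc_cons_cons]
    split <;> omega

lemma cc_append_le (X Y : List ℕ) : cc (X ++ Y) ≤ cc X + cc Y + 1 := by
  induction X with
  | nil => simp [cc_nil]
  | cons x X ih =>
    cases X with
    | nil =>
      have := cc_cons_le x Y
      simpa [cc_single] using this
    | cons x' X' =>
      simp only [List.cons_append] at ih ⊢
      rw [cc_cons_cons, cc_cons_cons]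
      split <;> omega

lemma le_cc_append (X Y : List ℕ) : cc X + cc Y ≤ cc (X ++ Y) := by
  induction X with
  | nil => simp [cc_nil]
  | cons x X ih =>
    cases X with
    | nil =>
      have := le_cc_cons x Y
      simpa [cc_single] using this
    | cons x' X' =>
      simp only [List.cons_append] at ih ⊢
      rw [cc_cons_cons, cc_cons_cons]
      split <;> omega

lemma zip_tail_append_singleton (M : List ℕ) (x : ℕ) :
    (M ++ [x]).zip ((M ++ [x]).drop 1) =
      M.zip (M.drop 1) ++ (M.getLast?.map (fun l => (l, x))).toList := by
  induction M with
  | nil => simp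
  | cons a M ih =>
    cases M with
    | nil => simp
    | cons b M' =>
      simp only [List.cons_append, List.drop_succ_cons, List.drop_zero,
        List.zip_cons_cons] at ih ⊢
      rw [ih]
      simp [List.getLast?]

lemma cc_append_singleton (M : List ℕ) (x : ℕ) :
    cc (M ++ [x]) = cc M +
      ((M.getLast?.map (fun l => (l, x))).toList).countP Pb := by
  simp only [cc, zip_tail_append_singleton, List.countP_append]

lemma Pb_swap (a b : ℕ) : Pb (a, b) = Pb (b, a) := by
  simp [Pb, Bool.or_comm]

lemma cc_reverse (L : List ℕ) : cc L.reverse = cc L := by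
  induction L with
  | nil => rfl
  | cons x L ih =>
    rw [List.reverse_cons, cc_append_singleton, ih]
    cases L with
    | nil => simp [cc_nil, cc_single]
    | cons y L' =>
      rw [cc_cons_cons]
      have hgl : ((y :: L').reverse).getLast? = some y := by
        simp [List.getLast?_reverse]
      rw [List.getLast?_reverse] at hgl
      rw [List.getLast?_reverse, hgl]
      simp only [Option.map_some, Option.toList_some, List.countP_cons,
        List.countP_nil]
      rw [Pb_swap]
      split <;> simp_all <;> omega

lemma bp_eq (π : List ℕ) : bp π = 1 + cc (π.drop 1) := by
  simp only [bp, cc, Pb]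
  congr 2
  simp [List.drop_drop]

/-- a prefix transreversal removes at most two breakpoints. -/
theorem prefixTransreversal_removes_at_most_two_breakpoints
    (n : ℕ) (π : List ℕ) (hπ : IsPerm n π)
    (j k : ℕ) (hj : 2 ≤ j) (hjk : j < k) (hk : k ≤ n + 1) :
    bp π - bp (prefixTransreversal π j k) ≤ 2 := by
  set A := (π.drop 1).take (j - 1) with hA
  set B := (π.drop j).take (k - j) with hB
  set C := π.drop k with hC
  have hlen : π.length = n + 2 := by
    have := hπ.1.length_eq
    simpa using this
  have htake1 : π.take 1 = [π.getD 0 0] := by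
    cases π with
    | nil => simp at hlen
    | cons a π' => simp [List.getD]
  have hdropj : π.drop 1 = A ++ π.drop j := by
    rw [hA]
    have : (π.drop 1).drop (j - 1) = π.drop j := by
      rw [List.drop_drop]
      congr 1
      omega
    rw [← this, List.take_append_drop]
  have hdropk : π.drop j = B ++ C := by
    rw [hB, hC]
    have : (π.drop j).drop (k - j) = π.drop k := by
      rw [List.drop_drop]
      congr 1
      omega
    rw [← this, List.take_append_drop]
  have h1 : π.drop 1 = A ++ (B ++ C) := by rw [hdropj, hdropk]
  have h2 : (prefixTransreversal π j k).drop 1 = B ++ (A.reverse ++ C) := by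
    unfold prefixTransreversal
    rw [← hA, ← hB, ← hC, htake1]
    simp [List.append_assoc]
  rw [bp_eq, bp_eq, h1, h2]
  have u1 : cc (A ++ (B ++ C)) ≤ cc A + cc (B ++ C) + 1 := cc_append_le _ _
  have u2 : cc (B ++ C) ≤ cc B + cc C + 1 := cc_append_le _ _
  have l1 : cc B + cc (A.reverse ++ C) ≤ cc (B ++ (A.reverse ++ C)) :=
    le_cc_append _ _
  have l2 : cc A.reverse + cc C ≤ cc (A.reverse ++ C) := le_cc_append _ _
  have hr : cc A.reverse = cc A := cc_reverse A
  omega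
end

section
/- For every permutation π, every sequence of operations, each a prefix reversal, a prefix transposition, or a prefix transreversal, that transforms π into the identity permutation has length at least ⌊b(π)/2⌋; i.e., d_RTT(π) ≥ ⌊b(π)/2⌋. -/
section BPLemmas

private def hh (x : ℕ) : Option ℕ → ℕ
  | some y => if (!(x + 1 == y || y + 1 == x)) then 1 else 0
  | none => 0

private lemma hh_symm (x y : ℕ) : hh x (some y) = hh y (some x) := by
  simp [hh, Bool.or_comm]

private lemma hh_le_one (x : ℕ) (o : Option ℕ) : hh x o ≤ 1 := by
  cases o <;> simp [hh] <;> split <;> simp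

private lemma bp'_nil : bp' [] = 0 := rfl
private lemma bp'_single (x : ℕ) : bp' [x] = 0 := rfl

private lemma bp'_cons (x : ℕ) (l : List ℕ) : bp' (x :: l) = hh x l.head? + bp' l := by
  cases l with
  | nil => rfl
  | cons y t => simp [bp', hh, List.countP_cons]; split <;> omega

private lemma bp'_concat (x : ℕ) : ∀ l : List ℕ, bp' (l ++ [x]) = bp' l + hh x l.getLast?
  | [] => by simp [bp'_single, bp'_nil, hh]
  | [y] => by
      rw [show ([y] ++ [x]) = y :: [x] from rfl, bp'_cons]
      simp [List.getLast?, bp'_single, hh_symm]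
  | y :: z :: l => by
      rw [show ((y :: z :: l) ++ [x]) = y :: ((z :: l) ++ [x]) from rfl,
        bp'_cons y ((z :: l) ++ [x]), bp'_concat x (z :: l), bp'_cons y (z :: l)]
      rw [List.getLast?_cons_cons]
      simp
      omega

private lemma bp'_reverse : ∀ l : List ℕ, bp' l.reverse = bp' l
  | [] => rfl
  | x :: l => by
      rw [List.reverse_cons, bp'_concat, bp'_reverse l, bp'_cons]
      rw [List.getLast?_reverse]
      cases l with
      | nil => simp [hh]
      | cons y t => simp [hh_symm]; omega

private lemma le_bp'_append : ∀ a b : List ℕ, bp' a + bp' b ≤ bp' (a ++ b)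
  | [], b => by simp [bp'_nil]
  | x :: a, b => by
      rw [List.cons_append, bp'_cons, bp'_cons]
      have := le_bp'_append a b
      have h2 : hh x a.head? ≤ hh x (a ++ b).head? := by
        cases a with
        | nil => simp [hh]
        | cons y t => simp
      omega

private lemma bp'_append_le : ∀ a b : List ℕ, bp' (a ++ b) ≤ bp' a + bp' b + 1
  | [], b => by simp [bp'_nil]
  | [x], b => by
      rw [List.singleton_append, bp'_cons, bp'_single]
      have := hh_le_one x b.head?
      omega
  | x :: y :: a, b => by
      rw [List.cons_append, bp'_cons x ((y :: a) ++ b), bp'_cons x (y :: a)]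
      have := bp'_append_le (y :: a) b
      simp only [List.cons_append, List.head?_cons] at this ⊢
      omega

private lemma bp'_tail_le (l : List ℕ) : bp' (l.drop 1) ≤ bp' l := by
  have := le_bp'_append (l.take 1) (l.drop 1)
  rw [List.take_append_drop] at this
  omega

private lemma bp'_range' : ∀ (m s : ℕ), bp' (List.range' s m) = 0
  | 0, _ => rfl
  | 1, _ => rfl
  | (m+2), s => by
      rw [List.range'_succ, bp'_cons, bp'_range' (m+1) (s+1)]
      simp [List.range'_succ, hh]

private lemma bp'_three (u v w : List ℕ) :
    bp' (u ++ (v ++ w)) ≤ bp' (v ++ (u ++ w)) + 2 := by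
  have h1 := bp'_append_le u (v ++ w)
  have h2 := bp'_append_le v w
  have h3 := le_bp'_append v (u ++ w)
  have h4 := le_bp'_append u w
  omega

private lemma bp'_three_rev (u v w : List ℕ) :
    bp' (u ++ (v ++ w)) ≤ bp' (v ++ (u.reverse ++ w)) + 2 := by
  have h1 := bp'_append_le u (v ++ w)
  have h2 := bp'_append_le v w
  have h3 := le_bp'_append v (u.reverse ++ w)
  have h4 := le_bp'_append u.reverse w
  have h5 := bp'_reverse u
  omega

private lemma step_bound (n : ℕ) (o : PrefOp) (ho : o.Valid n) (x : ℕ) (ρ : List ℕ) :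
    bp' ρ ≤ bp' ((o.apply (x :: ρ)).drop 1) + 2 := by
  cases o with
  | rev j =>
      obtain ⟨h3, _⟩ := ho
      obtain ⟨m, rfl⟩ : ∃ m, j = m + 1 := ⟨j - 1, by omega⟩
      have he : ((PrefOp.rev (m+1)).apply (x :: ρ)).drop 1
          = (ρ.take m).reverse ++ ρ.drop m := by
        simp [PrefOp.apply, prefixReversal]
      rw [he]
      have h1 := bp'_append_le (ρ.take m) (ρ.drop m)
      have h2 := le_bp'_append ((ρ.take m).reverse) (ρ.drop m)
      have h3 := bp'_reverse (ρ.take m)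
      conv_lhs => rw [← List.take_append_drop m ρ]
      omega
  | trans j k =>
      obtain ⟨h2, hjk, _⟩ := ho
      obtain ⟨a, rfl⟩ : ∃ a, j = a + 2 := ⟨j - 2, by omega⟩
      obtain ⟨b, rfl⟩ : ∃ b, k = a + b + 3 := ⟨k - a - 3, by omega⟩
      set u := ρ.take (a+1) with hu
      set v := (ρ.drop (a+1)).take (b+1) with hv
      have hw : (ρ.drop (a+1)).drop (b+1) = ρ.drop (a+b+2) := by
        rw [List.drop_drop]; congr 1; omega
      have he : ((PrefOp.trans (a+2) (a+b+3)).apply (x :: ρ)).drop 1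
          = v ++ (u ++ ρ.drop (a+b+2)) := by
        simp only [PrefOp.apply, prefixTransposition]
        have e1 : a + 2 - 1 = a + 1 := by omega
        have e2 : a + b + 3 - (a + 2) = b + 1 := by omega
        have e3 : (x :: ρ).drop (a+2) = ρ.drop (a+1) := rfl
        have e4 : (x :: ρ).drop (a+b+3) = ρ.drop (a+b+2) := rfl
        rw [e1, e2, e3, e4]
        simp [hu, hv, List.append_assoc]
      have hρ : u ++ (v ++ ρ.drop (a+b+2)) = ρ := by
        rw [← hw, List.take_append_drop, List.take_append_drop]
      rw [he]
      conv_lhs => rw [← hρ]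
      exact bp'_three u v _
  | transrev j k =>
      obtain ⟨h2, hjk, _⟩ := ho
      obtain ⟨a, rfl⟩ : ∃ a, j = a + 2 := ⟨j - 2, by omega⟩
      obtain ⟨b, rfl⟩ : ∃ b, k = a + b + 3 := ⟨k - a - 3, by omega⟩
      set u := ρ.take (a+1) with hu
      set v := (ρ.drop (a+1)).take (b+1) with hv
      have hw : (ρ.drop (a+1)).drop (b+1) = ρ.drop (a+b+2) := by
        rw [List.drop_drop]; congr 1; omega
      have he : ((PrefOp.transrev (a+2) (a+b+3)).apply (x :: ρ)).drop 1
          = v ++ (u.reverse ++ ρ.drop (a+b+2)) := by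
        simp only [PrefOp.apply, prefixTransreversal]
        have e1 : a + 2 - 1 = a + 1 := by omega
        have e2 : a + b + 3 - (a + 2) = b + 1 := by omega
        have e3 : (x :: ρ).drop (a+2) = ρ.drop (a+1) := rfl
        have e4 : (x :: ρ).drop (a+b+3) = ρ.drop (a+b+2) := rfl
        rw [e1, e2, e3, e4]
        simp [hu, hv, List.append_assoc]
      have hρ : u ++ (v ++ ρ.drop (a+b+2)) = ρ := by
        rw [← hw, List.take_append_drop, List.take_append_drop]
      rw [he]
      conv_lhs => rw [← hρ]
      exact bp'_three_rev u v _

private lemma apply_cons_ne (x : ℕ) (ρ : List ℕ) (o : PrefOp) : o.apply (x :: ρ) ≠ [] := by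
  cases o <;> simp [PrefOp.apply, prefixReversal, prefixTransposition, prefixTransreversal]

private lemma seq_bound (n : ℕ) : ∀ (ops : List PrefOp) (π : List ℕ), π ≠ [] →
    (∀ o ∈ ops, o.Valid n) →
    bp' (π.drop 1) ≤ bp' ((applySeq π ops).drop 1) + 2 * ops.length
  | [], π, _, _ => by simp [applySeq]
  | o :: ops, π, hne, hv => by
      obtain ⟨x, ρ, rfl⟩ := List.exists_cons_of_ne_nil hne
      have h1 := step_bound n o (hv o (by simp)) x ρ
      have h2 := seq_bound n ops (o.apply (x :: ρ)) (apply_cons_ne x ρ o)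
        (fun o' ho' => hv o' (by simp [ho']))
      simp only [applySeq, List.drop_succ_cons, List.drop_zero, List.length_cons] at *
      omega

end BPLemmas

/-- every sequence of prefix reversals, prefix transpositions and
prefix transreversals sorting `π` has length at least `⌊b(π)/2⌋`. -/
theorem sortRTT_length_lower_bound
    (n : ℕ) (π : List ℕ) (hπ : IsPerm n π)
    (ops : List PrefOp) (hval : ValidSeq n ops)
    (hsort : applySeq π ops = List.range (n + 2)) :
    bp π / 2 ≤ ops.length := by
  obtain ⟨hperm, -, -⟩ := hπ
  have hne : π ≠ [] := by
    intro h
    have := hperm.length_eq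
    simp [h] at this
  have hmain := seq_bound n ops π hne hval
  rw [hsort] at hmain
  have hr : bp' (List.range (n + 2)) = 0 := by
    rw [List.range_eq_range']; exact bp'_range' (n + 2) 0
  have ht := bp'_tail_le (List.range (n + 2))
  have hbp : bp π = 1 + bp' (π.drop 1) := by
    simp [bp, bp', List.drop_drop]
  omega
end

section
/- For every permutation π, the prefix reversal / prefix transposition / prefix transreversal distance satisfies d_RTT(π) ≤ b(π) − 1; i.e., π can be transformed into the identity permutation by at most b(π) − 1 operations, each a prefix reversal, a prefix transposition, or a prefix transreversal. -/
open List

def badb (a b : ℕ) : Bool := !(a + 1 == b || b + 1 == a)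

def bcost (a b : ℕ) : ℕ := if badb a b then 1 else 0

def Bct (l : List ℕ) : ℕ := (l.zip l.tail).countP (fun p => badb p.1 p.2)

lemma badb_symm (a b : ℕ) : badb a b = badb b a := by
  simp [badb, Bool.or_comm]

lemma bcost_symm (a b : ℕ) : bcost a b = bcost b a := by
  simp [bcost, badb_symm]

lemma bcost_le_one (a b : ℕ) : bcost a b ≤ 1 := by
  simp [bcost]; split <;> omega

lemma bcost_eq_one (a b : ℕ) (h1 : a + 1 ≠ b) (h2 : b + 1 ≠ a) : bcost a b = 1 := by
  simp [bcost, badb, h1, h2]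

lemma bcost_succ (a : ℕ) : bcost a (a+1) = 0 := by simp [bcost, badb]

lemma bcost_pred (a : ℕ) : bcost (a+1) a = 0 := by simp [bcost, badb]

lemma Bct_nil : Bct [] = 0 := rfl
lemma Bct_single (a : ℕ) : Bct [a] = 0 := rfl

lemma Bct_cons_cons (a b : ℕ) (l : List ℕ) :
    Bct (a :: b :: l) = bcost a b + Bct (b :: l) := by
  simp [Bct, bcost, List.countP_cons]
  split <;> simp [Nat.add_comm]

lemma Bct_append (l₁ l₂ : List ℕ) (h₁ : l₁ ≠ []) (h₂ : l₂ ≠ []) :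
    Bct (l₁ ++ l₂) = Bct l₁ + bcost (l₁.getLastD 0) (l₂.headD 0) + Bct l₂ := by
  induction l₁ with
  | nil => simp at h₁
  | cons a t ih =>
    cases t with
    | nil =>
      cases l₂ with
      | nil => simp at h₂
      | cons b t₂ =>
        simp [Bct_cons_cons, Bct_single]
    | cons b t' =>
      have := ih (by simp)
      simp only [cons_append] at *
      rw [Bct_cons_cons, this, Bct_cons_cons]
      simp [List.getLastD]
      omega

lemma Bct_reverse (l : List ℕ) : Bct l.reverse = Bct l := by
  induction l with
  | nil => rfl
  | cons a t ih =>
    cases t with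
    | nil => rfl
    | cons b t' =>
      rw [Bct_cons_cons, reverse_cons,
        Bct_append _ [a] (by simp) (by simp), ih, Bct_single]
      have : (reverse (b :: t')).getLastD 0 = b := by
        simp [List.getLastD_eq_getLast?, getLast?_reverse]
      rw [this]
      simp [bcost_symm]
      omega

section Helpers
variable (l : List ℕ)

lemma headD_getD (h : l ≠ []) : l.headD 0 = l.getD 0 0 := by cases l <;> simp_all

lemma getLastD_take (m : ℕ) (h1 : 1 ≤ m) (h2 : m ≤ l.length) :
    (l.take m).getLastD 0 = l.getD (m-1) 0 := by
  have hlen : (l.take m).length = m := by simp; omega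
  have hne : l.take m ≠ [] := by
    intro h; rw [h] at hlen; simp at hlen; omega
  rw [List.getLastD_eq_getLast?, List.getLast?_eq_getElem?]
  rw [hlen]
  rw [List.getElem?_take, if_pos (by omega), List.getD_eq_getElem?_getD]

lemma headD_drop (m : ℕ) (h : m < l.length) : (l.drop m).headD 0 = l.getD m 0 := by
  simp [List.headD_eq_head?, List.head?_drop, List.getD_eq_getElem?_getD]

lemma headD_take (t : ℕ) (ht : 1 ≤ t) : (l.take t).headD 0 = l.headD 0 := by
  cases l <;> cases t <;> simp_all

lemma headD_drop_take (m t : ℕ) (h : m < l.length) (ht : 1 ≤ t) :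
    ((l.drop m).take t).headD 0 = l.getD m 0 := by
  rw [headD_take _ t ht, headD_drop _ m h]

lemma getLastD_drop_take (m t : ℕ) (ht : 1 ≤ t) (h : m + t ≤ l.length) :
    ((l.drop m).take t).getLastD 0 = l.getD (m+t-1) 0 := by
  rw [getLastD_take _ t ht (by simp; omega)]
  rw [List.getD_eq_getElem _ _ (by simp; omega), List.getElem_drop,
    List.getD_eq_getElem _ _ (by omega)]
  congr 1; omega

lemma headD_reverse : l.reverse.headD 0 = l.getLastD 0 := by
  simp [List.headD_eq_head?, List.getLastD_eq_getLast?, List.head?_reverse]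

lemma getLastD_reverse : l.reverse.getLastD 0 = l.headD 0 := by
  simp [List.headD_eq_head?, List.getLastD_eq_getLast?, List.getLast?_reverse]

lemma getLastD_drop (m : ℕ) (h : m < l.length) :
    (l.drop m).getLastD 0 = l.getD (l.length - 1) 0 := by
  rw [List.getLastD_eq_getLast?, List.getLast?_eq_getElem?]
  have : (l.drop m).length = l.length - m := by simp
  rw [this, List.getElem?_drop, List.getD_eq_getElem?_getD]
  congr 2; omega

end Helpers

lemma badb_false_iff (a b : ℕ) : badb a b = false ↔ a + 1 = b ∨ b + 1 = a := by
  simp [badb]; tauto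

def IncRun (l : List ℕ) : Prop := ∀ i, i + 1 < l.length → l.getD (i+1) 0 = l.getD i 0 + 1
def DecRun (l : List ℕ) : Prop := ∀ i, i + 1 < l.length → l.getD i 0 = l.getD (i+1) 0 + 1

lemma run_mono : ∀ (l : List ℕ), l.Nodup →
    (∀ i, i + 1 < l.length → badb (l.getD i 0) (l.getD (i+1) 0) = false) →
    IncRun l ∨ DecRun l := by
  intro l
  induction l with
  | nil => intro _ _; left; intro i hi; simp at hi
  | cons a t ih =>
    intro hnd hadj
    cases t with
    | nil => left; intro i hi; simp at hi
    | cons b t' =>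
      have hnd' : (b :: t').Nodup := hnd.of_cons
      have hanotin : a ∉ (b :: t') := (List.nodup_cons.mp hnd).1
      have hadj' : ∀ i, i + 1 < (b :: t').length →
          badb ((b :: t').getD i 0) ((b :: t').getD (i+1) 0) = false := by
        intro i hi
        have := hadj (i+1) (by simpa using Nat.succ_lt_succ hi)
        simpa using this
      have h0 : b = a + 1 ∨ a = b + 1 := by
        have := (badb_false_iff a b).mp (by simpa using hadj 0 (by simp))
        tauto
      rcases ih hnd' hadj' with hinc | hdec
      · rcases h0 with h0 | h0
        · left
          intro i hi
          cases i with
          | zero => simpa using h0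
          | succ i => simpa using hinc i (by simpa using Nat.lt_of_succ_lt_succ hi)
        · cases t' with
          | nil =>
            right; intro i hi
            simp at hi
            have hi0 : i = 0 := by omega
            subst hi0
            simpa using h0
          | cons c t'' =>
            exfalso
            have := hinc 0 (by simp)
            simp at this
            exact hanotin (by simp [h0, ← this])
      · rcases h0 with h0 | h0
        · cases t' with
          | nil =>
            left; intro i hi
            simp at hi
            have hi0 : i = 0 := by omega
            subst hi0
            simpa using h0
          | cons c t'' =>
            exfalso
            have := hdec 0 (by simp)
            simp at this
            refine hanotin ?_
            have hac : a = c := by omega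
            simp [hac]
        · right
          intro i hi
          cases i with
          | zero => simpa using h0
          | succ i => simpa using hdec i (by simpa using Nat.lt_of_succ_lt_succ hi)

lemma IncRun.getD_eq (l : List ℕ) (h : IncRun l) :
    ∀ i, i < l.length → l.getD i 0 = l.getD 0 0 + i := by
  intro i
  induction i with
  | zero => simp
  | succ i ih =>
    intro hi
    rw [h i hi, ih (by omega)]
    omega

lemma DecRun.getD_eq (l : List ℕ) (h : DecRun l) :
    ∀ i, i < l.length → l.getD 0 0 = l.getD i 0 + i := by
  intro i
  induction i with
  | zero => simp
  | succ i ih =>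
    intro hi
    have := h i hi
    have := ih (by omega)
    omega

lemma headD_append (X W : List ℕ) (hX : X ≠ []) : (X ++ W).headD 0 = X.headD 0 := by
  cases X <;> simp_all

lemma getLastD_append (A Z : List ℕ) (hZ : Z ≠ []) : (A ++ Z).getLastD 0 = Z.getLastD 0 := by
  rw [List.getLastD_eq_getLast?, List.getLastD_eq_getLast?,
    List.getLast?_append_of_ne_nil A hZ]

lemma getD_length_sub_one (l : List ℕ) : l.getD (l.length - 1) 0 = l.getLastD 0 := by
  rw [List.getLastD_eq_getLast?, List.getLast?_eq_getElem?, List.getD_eq_getElem?_getD]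

lemma shapeA (n : ℕ) (T : List ℕ) (m K : ℕ)
    (hperm : (0 :: T).Perm (List.range (n+2)))
    (hlast : T.getD n 0 = n + 1)
    (hm : 1 ≤ m) (hmK : m < K) (hK : K ≤ n) :
    (PrefOp.trans (m+1) (K+1)).Valid n ∧
    (PrefOp.trans (m+1) (K+1)).apply (0 :: T) =
      0 :: ((T.drop m).take (K-m) ++ T.take m ++ T.drop K) ∧
    (0 :: ((T.drop m).take (K-m) ++ T.take m ++ T.drop K)).Perm (List.range (n+2)) ∧
    ((T.drop m).take (K-m) ++ T.take m ++ T.drop K).getD n 0 = n + 1 ∧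
    Bct ((T.drop m).take (K-m) ++ T.take m ++ T.drop K)
      + bcost (T.getD (m-1) 0) (T.getD m 0) + bcost (T.getD (K-1) 0) (T.getD K 0)
      = Bct T + bcost (T.getD (K-1) 0) (T.getD 0 0) + bcost (T.getD (m-1) 0) (T.getD K 0) := by
  have hlen : T.length = n + 1 := by
    have := hperm.length_eq
    simp [List.length_range] at this
    omega
  set X := T.take m with hX
  set Y := (T.drop m).take (K-m) with hY
  set Z := T.drop K with hZ
  have hXlen : X.length = m := by simp [hX]; omega
  have hYlen : Y.length = K - m := by simp [hY]; omega
  have hZlen : Z.length = n + 1 - K := by simp [hZ]; omega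
  have hXne : X ≠ [] := List.ne_nil_of_length_pos (by omega)
  have hYne : Y ≠ [] := List.ne_nil_of_length_pos (by omega)
  have hZne : Z ≠ [] := List.ne_nil_of_length_pos (by omega)
  have hTne : T ≠ [] := List.ne_nil_of_length_pos (by omega)
  have hT : T = X ++ (Y ++ Z) := by
    conv_lhs => rw [← List.take_append_drop m T]
    congr 1
    conv_lhs => rw [← List.take_append_drop (K-m) (T.drop m)]
    congr 1
    rw [List.drop_drop]
    congr 1
    omega
  -- head/last computations
  have eXh : X.headD 0 = T.getD 0 0 := by
    rw [hX, headD_take T m hm, headD_getD T hTne]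
  have eXl : X.getLastD 0 = T.getD (m-1) 0 := getLastD_take T m hm (by omega)
  have eYh : Y.headD 0 = T.getD m 0 := headD_drop_take T m (K-m) (by omega) (by omega)
  have eYl : Y.getLastD 0 = T.getD (K-1) 0 := by
    rw [hY, getLastD_drop_take T m (K-m) (by omega) (by omega)]
    congr 1
    omega
  have eZh : Z.headD 0 = T.getD K 0 := headD_drop T K (by omega)
  -- Bct of T
  have hBT : Bct T = Bct X + bcost (T.getD (m-1) 0) (T.getD m 0) + Bct Y
      + bcost (T.getD (K-1) 0) (T.getD K 0) + Bct Z := by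
    conv_lhs => rw [hT]
    rw [Bct_append X (Y ++ Z) hXne (by simp [hYne]),
      Bct_append Y Z hYne hZne, headD_append Y Z hYne, eXl, eYh, eYl, eZh]
    omega
  -- Bct of T'
  have hBT' : Bct (Y ++ X ++ Z) = Bct Y + bcost (T.getD (K-1) 0) (T.getD 0 0) + Bct X
      + bcost (T.getD (m-1) 0) (T.getD K 0) + Bct Z := by
    rw [List.append_assoc,
      Bct_append Y (X ++ Z) hYne (by simp [hXne]),
      Bct_append X Z hXne hZne, headD_append X Z hXne, eYl, eXh, eXl, eZh]
    omega
  have hpermT : (Y ++ X ++ Z).Perm T := by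
    have h1 : (Y ++ X) ++ Z ~ (X ++ Y) ++ Z := (List.perm_append_comm).append_right Z
    rw [hT]
    simpa [List.append_assoc] using h1
  have hperm' : (0 :: (Y ++ X ++ Z)).Perm (List.range (n+2)) := (hpermT.cons 0).trans hperm
  have hlast' : (Y ++ X ++ Z).getD n 0 = n + 1 := by
    have hlen' : (Y ++ X ++ Z).length = n + 1 := by rw [hpermT.length_eq, hlen]
    have : (Y ++ X ++ Z).getD n 0 = (Y ++ X ++ Z).getLastD 0 := by
      rw [← getD_length_sub_one, hlen']
      norm_num
    rw [this, getLastD_append (Y ++ X) Z hZne, hZ, getLastD_drop T K (by omega), hlen]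
    simpa using hlast
  refine ⟨⟨by omega, by omega, by omega⟩, ?_, hperm', hlast', by omega⟩
  show prefixTransposition (0 :: T) (m+1) (K+1) = _
  simp only [prefixTransposition, List.take_succ_cons, List.take_zero,
    List.drop_succ_cons, List.drop_zero, Nat.succ_sub_succ, Nat.add_sub_cancel]
  simp [hX, hY, hZ]

lemma shapeB (n : ℕ) (T : List ℕ) (m K : ℕ)
    (hperm : (0 :: T).Perm (List.range (n+2)))
    (hlast : T.getD n 0 = n + 1)
    (hm : 1 ≤ m) (hmK : m < K) (hK : K ≤ n) :
    (PrefOp.transrev (m+1) (K+1)).Valid n ∧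
    (PrefOp.transrev (m+1) (K+1)).apply (0 :: T) =
      0 :: ((T.drop m).take (K-m) ++ (T.take m).reverse ++ T.drop K) ∧
    (0 :: ((T.drop m).take (K-m) ++ (T.take m).reverse ++ T.drop K)).Perm (List.range (n+2)) ∧
    ((T.drop m).take (K-m) ++ (T.take m).reverse ++ T.drop K).getD n 0 = n + 1 ∧
    Bct ((T.drop m).take (K-m) ++ (T.take m).reverse ++ T.drop K)
      + bcost (T.getD (m-1) 0) (T.getD m 0) + bcost (T.getD (K-1) 0) (T.getD K 0)
      = Bct T + bcost (T.getD (K-1) 0) (T.getD (m-1) 0) + bcost (T.getD 0 0) (T.getD K 0) := by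
  have hlen : T.length = n + 1 := by
    have := hperm.length_eq
    simp [List.length_range] at this
    omega
  set X := T.take m with hX
  set Y := (T.drop m).take (K-m) with hY
  set Z := T.drop K with hZ
  have hXlen : X.length = m := by simp [hX]; omega
  have hYlen : Y.length = K - m := by simp [hY]; omega
  have hZlen : Z.length = n + 1 - K := by simp [hZ]; omega
  have hXne : X ≠ [] := List.ne_nil_of_length_pos (by omega)
  have hXrne : X.reverse ≠ [] := by simp [hXne]
  have hYne : Y ≠ [] := List.ne_nil_of_length_pos (by omega)
  have hZne : Z ≠ [] := List.ne_nil_of_length_pos (by omega)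
  have hTne : T ≠ [] := List.ne_nil_of_length_pos (by omega)
  have hT : T = X ++ (Y ++ Z) := by
    conv_lhs => rw [← List.take_append_drop m T]
    congr 1
    conv_lhs => rw [← List.take_append_drop (K-m) (T.drop m)]
    congr 1
    rw [List.drop_drop]
    congr 1
    omega
  have eXh : X.headD 0 = T.getD 0 0 := by
    rw [hX, headD_take T m hm, headD_getD T hTne]
  have eXl : X.getLastD 0 = T.getD (m-1) 0 := getLastD_take T m hm (by omega)
  have eXrh : X.reverse.headD 0 = T.getD (m-1) 0 := by rw [headD_reverse, eXl]
  have eXrl : X.reverse.getLastD 0 = T.getD 0 0 := by rw [getLastD_reverse, eXh]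
  have eYh : Y.headD 0 = T.getD m 0 := headD_drop_take T m (K-m) (by omega) (by omega)
  have eYl : Y.getLastD 0 = T.getD (K-1) 0 := by
    rw [hY, getLastD_drop_take T m (K-m) (by omega) (by omega)]
    congr 1
    omega
  have eZh : Z.headD 0 = T.getD K 0 := headD_drop T K (by omega)
  have hBT : Bct T = Bct X + bcost (T.getD (m-1) 0) (T.getD m 0) + Bct Y
      + bcost (T.getD (K-1) 0) (T.getD K 0) + Bct Z := by
    conv_lhs => rw [hT]
    rw [Bct_append X (Y ++ Z) hXne (by simp [hYne]),
      Bct_append Y Z hYne hZne, headD_append Y Z hYne, eXl, eYh, eYl, eZh]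
    omega
  have hBT' : Bct (Y ++ X.reverse ++ Z) = Bct Y + bcost (T.getD (K-1) 0) (T.getD (m-1) 0)
      + Bct X + bcost (T.getD 0 0) (T.getD K 0) + Bct Z := by
    rw [List.append_assoc,
      Bct_append Y (X.reverse ++ Z) hYne (by simp [hXrne]),
      Bct_append X.reverse Z hXrne hZne, headD_append X.reverse Z hXrne,
      Bct_reverse, eYl, eXrh, eXrl, eZh]
    omega
  have hpermT : (Y ++ X.reverse ++ Z).Perm T := by
    have h1 : (Y ++ X.reverse) ++ Z ~ (Y ++ X) ++ Z :=
      (((List.reverse_perm X).append_left Y).append_right Z)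
    have h2 : (Y ++ X) ++ Z ~ (X ++ Y) ++ Z := (List.perm_append_comm).append_right Z
    rw [hT]
    have := h1.trans h2
    simpa [List.append_assoc] using this
  have hperm' : (0 :: (Y ++ X.reverse ++ Z)).Perm (List.range (n+2)) :=
    (hpermT.cons 0).trans hperm
  have hlast' : (Y ++ X.reverse ++ Z).getD n 0 = n + 1 := by
    have hlen' : (Y ++ X.reverse ++ Z).length = n + 1 := by rw [hpermT.length_eq, hlen]
    have : (Y ++ X.reverse ++ Z).getD n 0 = (Y ++ X.reverse ++ Z).getLastD 0 := by
      rw [← getD_length_sub_one, hlen']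
      norm_num
    rw [this, getLastD_append (Y ++ X.reverse) Z hZne, hZ, getLastD_drop T K (by omega), hlen]
    simpa using hlast
  refine ⟨⟨by omega, by omega, by omega⟩, ?_, hperm', hlast', by omega⟩
  show prefixTransreversal (0 :: T) (m+1) (K+1) = _
  simp only [prefixTransreversal, List.take_succ_cons, List.take_zero,
    List.drop_succ_cons, List.drop_zero, Nat.succ_sub_succ, Nat.add_sub_cancel]
  simp [hX, hY, hZ]

lemma shapeC (n : ℕ) (T : List ℕ) (m : ℕ)
    (hperm : (0 :: T).Perm (List.range (n+2)))
    (hlast : T.getD n 0 = n + 1)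
    (hm : 2 ≤ m) (hmn : m ≤ n) :
    (PrefOp.rev (m+1)).Valid n ∧
    (PrefOp.rev (m+1)).apply (0 :: T) = 0 :: ((T.take m).reverse ++ T.drop m) ∧
    (0 :: ((T.take m).reverse ++ T.drop m)).Perm (List.range (n+2)) ∧
    ((T.take m).reverse ++ T.drop m).getD n 0 = n + 1 ∧
    Bct ((T.take m).reverse ++ T.drop m) + bcost (T.getD (m-1) 0) (T.getD m 0)
      = Bct T + bcost (T.getD 0 0) (T.getD m 0) := by
  have hlen : T.length = n + 1 := by
    have := hperm.length_eq
    simp [List.length_range] at this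
    omega
  set X := T.take m with hX
  set D := T.drop m with hD
  have hXlen : X.length = m := by simp [hX]; omega
  have hDlen : D.length = n + 1 - m := by simp [hD]; omega
  have hXne : X ≠ [] := List.ne_nil_of_length_pos (by omega)
  have hXrne : X.reverse ≠ [] := by simp [hXne]
  have hDne : D ≠ [] := List.ne_nil_of_length_pos (by omega)
  have hTne : T ≠ [] := List.ne_nil_of_length_pos (by omega)
  have hT : T = X ++ D := (List.take_append_drop m T).symm
  have eXh : X.headD 0 = T.getD 0 0 := by
    rw [hX, headD_take T m (by omega), headD_getD T hTne]
  have eXl : X.getLastD 0 = T.getD (m-1) 0 := getLastD_take T m (by omega) (by omega)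
  have eXrh : X.reverse.headD 0 = T.getD (m-1) 0 := by rw [headD_reverse, eXl]
  have eXrl : X.reverse.getLastD 0 = T.getD 0 0 := by rw [getLastD_reverse, eXh]
  have eDh : D.headD 0 = T.getD m 0 := headD_drop T m (by omega)
  have hBT : Bct T = Bct X + bcost (T.getD (m-1) 0) (T.getD m 0) + Bct D := by
    conv_lhs => rw [hT]
    rw [Bct_append X D hXne hDne, eXl, eDh]
  have hBT' : Bct (X.reverse ++ D)
      = Bct X + bcost (T.getD 0 0) (T.getD m 0) + Bct D := by
    rw [Bct_append X.reverse D hXrne hDne, Bct_reverse, eXrl, eDh]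
  have hpermT : (X.reverse ++ D).Perm T := by
    rw [hT]
    exact (List.reverse_perm X).append_right D
  have hperm' : (0 :: (X.reverse ++ D)).Perm (List.range (n+2)) :=
    (hpermT.cons 0).trans hperm
  have hlast' : (X.reverse ++ D).getD n 0 = n + 1 := by
    have hlen' : (X.reverse ++ D).length = n + 1 := by rw [hpermT.length_eq, hlen]
    have : (X.reverse ++ D).getD n 0 = (X.reverse ++ D).getLastD 0 := by
      rw [← getD_length_sub_one, hlen']
      norm_num
    rw [this, getLastD_append X.reverse D hDne, hD, getLastD_drop T m (by omega), hlen]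
    simpa using hlast
  refine ⟨⟨by omega, by omega⟩, ?_, hperm', hlast', by omega⟩
  show prefixReversal (0 :: T) (m+1) = _
  simp only [prefixReversal, List.take_succ_cons, List.take_zero,
    List.drop_succ_cons, List.drop_zero, Nat.add_sub_cancel]
  simp [hX, hD]

lemma badb_true_iff (a b : ℕ) : badb a b = true ↔ a + 1 ≠ b ∧ b + 1 ≠ a := by
  simp [badb]

lemma bcost_of_badb {a b : ℕ} (h : badb a b = true) : bcost a b = 1 := by
  simp [bcost, h]

lemma step (n : ℕ) (T : List ℕ)
    (hperm : (0 :: T).Perm (List.range (n+2)))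
    (hlast : T.getD n 0 = n + 1)
    (hpos : 0 < Bct T) :
    ∃ (op : PrefOp) (T' : List ℕ), op.Valid n ∧
      op.apply (0 :: T) = 0 :: T' ∧
      (0 :: T').Perm (List.range (n+2)) ∧
      T'.getD n 0 = n + 1 ∧
      Bct T' < Bct T := by
  have hlen : T.length = n + 1 := by
    have := hperm.length_eq
    simp [List.length_range] at this
    omega
  have hnd0 : (0 :: T).Nodup := hperm.symm.nodup List.nodup_range
  have hTnd : T.Nodup := hnd0.of_cons
  have h0nin : (0:ℕ) ∉ T := (List.nodup_cons.mp hnd0).1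
  have hinj : ∀ i j, i < T.length → j < T.length → T.getD i 0 = T.getD j 0 → i = j := by
    intro i j hi hj h
    rw [List.getD_eq_getElem T 0 hi, List.getD_eq_getElem T 0 hj] at h
    exact (List.Nodup.getElem_inj_iff hTnd).mp h
  have hval : ∀ i, i < T.length → 0 < T.getD i 0 ∧ T.getD i 0 < n + 2 := by
    intro i hi
    rw [List.getD_eq_getElem T 0 hi]
    have hmem : T[i] ∈ T := List.getElem_mem hi
    have h2 : T[i] ∈ List.range (n+2) := hperm.mem_iff.mp (by simp [hmem])
    have h3 : T[i] ≠ 0 := by intro h; rw [h] at hmem; exact h0nin hmem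
    simp [List.mem_range] at h2
    omega
  have hmemT : ∀ v, 0 < v → v < n + 2 → ∃ k, k < T.length ∧ T.getD k 0 = v := by
    intro v hv1 hv2
    have : v ∈ (0 :: T) := hperm.mem_iff.mpr (by simp [List.mem_range]; omega)
    have hvT : v ∈ T := by
      rcases List.mem_cons.mp this with h | h
      · omega
      · exact h
    obtain ⟨k, hk, hkv⟩ := List.mem_iff_getElem.mp hvT
    exact ⟨k, hk, by rw [List.getD_eq_getElem T 0 hk]; exact hkv⟩
  -- find the first breakpoint
  have hex : ∃ i, i + 1 < T.length ∧ badb (T.getD i 0) (T.getD (i+1) 0) = true := by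
    rw [Bct, List.countP_pos_iff] at hpos
    obtain ⟨p, hpmem, hpbad⟩ := hpos
    obtain ⟨i, hi, hip⟩ := List.mem_iff_getElem.mp hpmem
    have hil : i + 1 < T.length := by
      simp [List.length_zip, List.length_tail] at hi
      omega
    refine ⟨i, hil, ?_⟩
    have : p = (T[i]'(by omega), T.tail[i]'(by simp [List.length_tail]; omega)) := by
      rw [← hip]; exact List.getElem_zip ..
    rw [this] at hpbad
    have ht : T.tail[i]'(by simp [List.length_tail]; omega) = T[i+1]'hil := List.getElem_tail ..
    rw [List.getD_eq_getElem T 0 (by omega), List.getD_eq_getElem T 0 hil, ← ht]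
    exact hpbad
  classical
  obtain ⟨hi₀len, hi₀bad⟩ := Nat.find_spec hex
  set m := Nat.find hex + 1 with hmdef
  have hmlen : m < T.length := hi₀len
  have hmn : m ≤ n := by omega
  have hbadm : badb (T.getD (m-1) 0) (T.getD m 0) = true := by
    have hm1 : m - 1 = Nat.find hex := by omega
    rw [hm1]
    exact hi₀bad
  have hgood : ∀ i, i + 1 < m → badb (T.getD i 0) (T.getD (i+1) 0) = false := by
    intro i hi
    have := Nat.find_min hex (m := i) (by omega)
    simp only [not_and] at this
    have h2 := this (by omega)
    exact Bool.not_eq_true _ ▸ (by simpa using h2)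
  set X := T.take m with hX
  have hXlen : X.length = m := by simp [hX]; omega
  have hgetX : ∀ i, i < m → X.getD i 0 = T.getD i 0 := by
    intro i hi
    rw [hX, List.getD_eq_getElem?_getD, List.getD_eq_getElem?_getD,
      List.getElem?_take, if_pos hi]
  have hXnd : X.Nodup := hTnd.sublist (List.take_sublist m T)
  have hXadj : ∀ i, i + 1 < X.length → badb (X.getD i 0) (X.getD (i+1) 0) = false := by
    intro i hi
    rw [hXlen] at hi
    rw [hgetX i (by omega), hgetX (i+1) (by omega)]
    exact hgood i hi
  have hrun := run_mono X hXnd hXadj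
  have hmemX : ∀ v, v ∈ X ↔ ∃ i, i < m ∧ T.getD i 0 = v := by
    intro v
    rw [List.mem_iff_getElem]
    constructor
    · rintro ⟨i, hi, hv⟩
      rw [hXlen] at hi
      refine ⟨i, hi, ?_⟩
      rw [← hgetX i hi, List.getD_eq_getElem X 0 (by omega)]
      exact hv
    · rintro ⟨i, hi, hv⟩
      refine ⟨i, by omega, ?_⟩
      rw [← List.getD_eq_getElem X 0 (by omega), hgetX i hi]
      exact hv
  set a := T.getD 0 0 with ha
  set b := T.getD (m-1) 0 with hb
  have hbne : b ≠ n + 1 := by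
    intro h
    have := hinj (m-1) n (by omega) (by omega) (by rw [← hb, h, hlast])
    omega
  have hbval := hval (m-1) (by omega)
  have haval := hval 0 (by omega)
  by_cases hb1 : b + 1 ∈ X
  · -- Case II : the first strip is decreasing; use a+1
    have hdec : DecRun X := by
      rcases hrun with hinc | hdec
      · exfalso
        obtain ⟨i, hi, hiv⟩ := (hmemX (b+1)).mp hb1
        have e1 : X.getD i 0 = X.getD 0 0 + i := hinc.getD_eq X i (by omega)
        have e2 : X.getD (m-1) 0 = X.getD 0 0 + (m-1) := hinc.getD_eq X (m-1) (by omega)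
        rw [hgetX i hi] at e1
        rw [hgetX (m-1) (by omega), ← hb] at e2
        omega
      · exact hdec
    have hm2 : 2 ≤ m := by
      by_contra h
      have hm1 : m = 1 := by omega
      obtain ⟨i, hi, hiv⟩ := (hmemX (b+1)).mp hb1
      have : i = 0 := by omega
      subst this
      have hb0 : b = T.getD 0 0 := by
        rw [hb]
        congr 1
        omega
      omega
    have hXa0 : X.getD 0 0 = a := by rw [hgetX 0 (by omega)]
    have hane : a ≠ n + 1 := by
      intro h
      have := hinj 0 n (by omega) (by omega) (by rw [← ha, h, hlast])
      omega
    have ha1nX : a + 1 ∉ X := by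
      intro hmem
      obtain ⟨i, hi, hiv⟩ := (hmemX (a+1)).mp hmem
      have := hdec.getD_eq X i (by omega)
      rw [hgetX i hi, hXa0] at this
      omega
    obtain ⟨k0, hk0len, hk0v⟩ := hmemT (a+1) (by omega) (by omega)
    have hk0m : m ≤ k0 := by
      by_contra h
      exact ha1nX ((hmemX (a+1)).mpr ⟨k0, by omega, hk0v⟩)
    rcases Nat.eq_or_lt_of_le hk0m with hk0eq | hk0gt
    · -- IIa : reversal
      obtain ⟨hvalid, happly, hperm', hlast', heq⟩ := shapeC n T m hperm hlast hm2 hmn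
      refine ⟨_, _, hvalid, happly, hperm', hlast', ?_⟩
      have e1 : bcost (T.getD (m-1) 0) (T.getD m 0) = 1 := bcost_of_badb hbadm
      have e2 : bcost (T.getD 0 0) (T.getD m 0) = 0 := by
        rw [hk0eq, hk0v, ← ha]; exact bcost_succ a
      omega
    · by_cases hq : T.getD (k0-1) 0 = a + 2
      · -- IIc : transposition with K = k0+1
        have hk0n : k0 < n := by
          rcases Nat.eq_or_lt_of_le (by omega : k0 ≤ n) with h | h
          · exfalso
            have : a + 1 = n + 1 := by rw [← hk0v, h, hlast]
            have := (hval (k0-1) (by omega)).2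
            omega
          · omega
        obtain ⟨hvalid, happly, hperm', hlast', heq⟩ :=
          shapeA n T m (k0+1) hperm hlast (by omega) (by omega) (by omega)
        refine ⟨_, _, hvalid, happly, hperm', hlast', ?_⟩
        simp only [Nat.add_sub_cancel] at heq
        have e1 : bcost (T.getD (m-1) 0) (T.getD m 0) = 1 := bcost_of_badb hbadm
        have e2 : bcost (T.getD k0 0) (T.getD (k0+1) 0) = 1 := by
          rw [hk0v]
          apply bcost_eq_one
          · intro h
            have := hinj (k0-1) (k0+1) (by omega) (by omega) (by omega)
            omega
          · intro h
            have := hinj 0 (k0+1) (by omega) (by omega) (by omega)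
            omega
        have e3 : bcost (T.getD k0 0) (T.getD 0 0) = 0 := by
          rw [hk0v, ← ha]; exact bcost_pred a
        have e4 := bcost_le_one (T.getD (m-1) 0) (T.getD (k0+1) 0)
        omega
      · -- IIb : transreversal with K = k0
        obtain ⟨hvalid, happly, hperm', hlast', heq⟩ :=
          shapeB n T m k0 hperm hlast (by omega) hk0gt (by omega)
        refine ⟨_, _, hvalid, happly, hperm', hlast', ?_⟩
        have e1 : bcost (T.getD (m-1) 0) (T.getD m 0) = 1 := bcost_of_badb hbadm
        have e2 : bcost (T.getD (k0-1) 0) (T.getD k0 0) = 1 := by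
          rw [hk0v]
          apply bcost_eq_one
          · intro h
            have := hinj 0 (k0-1) (by omega) (by omega) (by omega)
            omega
          · omega
        have e3 : bcost (T.getD 0 0) (T.getD k0 0) = 0 := by
          rw [hk0v, ← ha]; exact bcost_succ a
        have e4 := bcost_le_one (T.getD (k0-1) 0) (T.getD (m-1) 0)
        omega
  · -- Case I : b+1 is not in the strip
    obtain ⟨k0, hk0len, hk0v⟩ := hmemT (b+1) (by omega) (by omega)
    have hk0m : m ≤ k0 := by
      by_contra h
      exact hb1 ((hmemX (b+1)).mpr ⟨k0, by omega, hk0v⟩)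
    have hk0m' : m < k0 := by
      rcases Nat.eq_or_lt_of_le hk0m with h | h
      · exfalso
        have := (badb_true_iff _ _).mp hbadm
        rw [← h] at hk0v
        omega
      · exact h
    by_cases hq : T.getD (k0-1) 0 = b + 2
    · -- Ib : transreversal with K = k0+1
      have hk0n : k0 < n := by
        rcases Nat.eq_or_lt_of_le (by omega : k0 ≤ n) with h | h
        · exfalso
          have : b + 1 = n + 1 := by rw [← hk0v, h, hlast]
          have := (hval (k0-1) (by omega)).2
          omega
        · omega
      obtain ⟨hvalid, happly, hperm', hlast', heq⟩ :=
        shapeB n T m (k0+1) hperm hlast (by omega) (by omega) (by omega)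
      refine ⟨_, _, hvalid, happly, hperm', hlast', ?_⟩
      simp only [Nat.add_sub_cancel] at heq
      have e1 : bcost (T.getD (m-1) 0) (T.getD m 0) = 1 := bcost_of_badb hbadm
      have e2 : bcost (T.getD k0 0) (T.getD (k0+1) 0) = 1 := by
        rw [hk0v]
        apply bcost_eq_one
        · intro h
          have := hinj (k0-1) (k0+1) (by omega) (by omega) (by omega)
          omega
        · intro h
          have := hinj (m-1) (k0+1) (by omega) (by omega) (by omega)
          omega
      have e3 : bcost (T.getD k0 0) (T.getD (m-1) 0) = 0 := by
        rw [hk0v, ← hb]; exact bcost_pred b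
      have e4 := bcost_le_one (T.getD 0 0) (T.getD (k0+1) 0)
      omega
    · -- Ia : transposition with K = k0
      obtain ⟨hvalid, happly, hperm', hlast', heq⟩ :=
        shapeA n T m k0 hperm hlast (by omega) hk0m' (by omega)
      refine ⟨_, _, hvalid, happly, hperm', hlast', ?_⟩
      have e1 : bcost (T.getD (m-1) 0) (T.getD m 0) = 1 := bcost_of_badb hbadm
      have e2 : bcost (T.getD (k0-1) 0) (T.getD k0 0) = 1 := by
        rw [hk0v]
        apply bcost_eq_one
        · intro h
          have := hinj (m-1) (k0-1) (by omega) (by omega) (by omega)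
          omega
        · omega
      have e3 : bcost (T.getD (m-1) 0) (T.getD k0 0) = 0 := by
        rw [hk0v, ← hb]; exact bcost_succ b
      have e4 := bcost_le_one (T.getD (k0-1) 0) (T.getD 0 0)
      omega

lemma sorted_of_Bct_zero (n : ℕ) (T : List ℕ)
    (hperm : (0 :: T).Perm (List.range (n+2)))
    (hlast : T.getD n 0 = n + 1)
    (h0 : Bct T = 0) : (0 :: T) = List.range (n+2) := by
  have hlen : T.length = n + 1 := by
    have := hperm.length_eq
    simp [List.length_range] at this
    omega
  have hnd0 : (0 :: T).Nodup := hperm.symm.nodup List.nodup_range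
  have hTnd : T.Nodup := hnd0.of_cons
  have h0nin : (0:ℕ) ∉ T := (List.nodup_cons.mp hnd0).1
  have hval : ∀ i, i < T.length → 0 < T.getD i 0 ∧ T.getD i 0 < n + 2 := by
    intro i hi
    rw [List.getD_eq_getElem T 0 hi]
    have hmem : T[i] ∈ T := List.getElem_mem hi
    have h2 : T[i] ∈ List.range (n+2) := hperm.mem_iff.mp (by simp [hmem])
    have h3 : T[i] ≠ 0 := by intro h; rw [h] at hmem; exact h0nin hmem
    simp [List.mem_range] at h2
    omega
  have hadj : ∀ i, i + 1 < T.length → badb (T.getD i 0) (T.getD (i+1) 0) = false := by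
    intro i hi
    by_contra h
    have hb : badb (T.getD i 0) (T.getD (i+1) 0) = true := by
      cases hbb : badb (T.getD i 0) (T.getD (i+1) 0)
      · exact absurd hbb h
      · rfl
    have hzl : i < (T.zip T.tail).length := by
      simp [List.length_zip, List.length_tail]
      omega
    have hmem : (T[i]'(by omega), T[i+1]'hi) ∈ T.zip T.tail := by
      have : (T.zip T.tail)[i]'hzl = (T[i]'(by omega), T.tail[i]'(by simp [List.length_tail]; omega)) :=
        List.getElem_zip ..
      rw [List.getElem_tail] at this
      rw [← this]
      exact List.getElem_mem hzl
    have := List.countP_eq_zero.mp h0 _ hmem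
    rw [List.getD_eq_getElem T 0 (by omega), List.getD_eq_getElem T 0 hi] at hb
    simp at this
    rw [this] at hb
    simp at hb
  rcases run_mono T hTnd hadj with hinc | hdec
  · have hT0 : T.getD 0 0 = 1 := by
      have := hinc.getD_eq T n (by omega)
      rw [hlast] at this
      omega
    have hTi : ∀ i, i < T.length → T.getD i 0 = i + 1 := by
      intro i hi
      have := hinc.getD_eq T i hi
      rw [hT0] at this
      omega
    apply List.ext_getElem
    · simp [hlen, List.length_range]
    · intro i h1 h2
      rw [List.getElem_range]
      cases i with
      | zero => rfl
      | succ i =>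
        rw [List.getElem_cons_succ]
        have hi : i < T.length := by simp at h1; omega
        rw [← List.getD_eq_getElem T 0 hi, hTi i hi]
  · have hn0 : n = 0 := by
      have h1 := hdec.getD_eq T n (by omega)
      rw [hlast] at h1
      have := (hval 0 (by omega)).2
      omega
    subst hn0
    have : T.length = 1 := by omega
    match T, this with
    | [t], _ =>
      have : t = 1 := by simpa using hlast
      subst this
      rfl

lemma key (c : ℕ) : ∀ (n : ℕ) (T : List ℕ),
    (0 :: T).Perm (List.range (n+2)) → T.getD n 0 = n + 1 → Bct T ≤ c →
    ∃ ops : List PrefOp, ValidSeq n ops ∧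
      applySeq (0 :: T) ops = List.range (n + 2) ∧
      ops.length ≤ Bct T := by
  induction c with
  | zero =>
    intro n T hperm hlast hc
    refine ⟨[], ?_, ?_, by simp⟩
    · intro o ho; simp at ho
    · simpa [applySeq] using sorted_of_Bct_zero n T hperm hlast (by omega)
  | succ c ih =>
    intro n T hperm hlast hc
    by_cases h0 : Bct T = 0
    · refine ⟨[], ?_, ?_, by simp⟩
      · intro o ho; simp at ho
      · simpa [applySeq] using sorted_of_Bct_zero n T hperm hlast h0
    · obtain ⟨op, T', hvalid, happly, hperm', hlast', hlt⟩ :=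
        step n T hperm hlast (by omega)
      obtain ⟨ops, hv, hap, hle⟩ := ih n T' hperm' hlast' (by omega)
      refine ⟨op :: ops, ?_, ?_, ?_⟩
      · intro o ho
        rcases List.mem_cons.mp ho with h | h
        · rw [h]; exact hvalid
        · exact hv o h
      · show applySeq (op.apply (0 :: T)) ops = _
        rw [happly]
        exact hap
      · simp only [List.length_cons]
        omega

/-- every permutation can be sorted by at most `b(π) − 1`
operations, each a prefix reversal, a prefix transposition or a prefix
transreversal. -/
theorem sortRTT_upper_bound
    (n : ℕ) (π : List ℕ) (hπ : IsPerm n π) :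
    ∃ ops : List PrefOp, ValidSeq n ops ∧
      applySeq π ops = List.range (n + 2) ∧
      ops.length ≤ bp π - 1 := by
  obtain ⟨hperm, hhead, hlast⟩ := hπ
  have hlen : π.length = n + 2 := by
    have := hperm.length_eq
    simpa [List.length_range] using this
  match π, hlen with
  | p0 :: T, hlen =>
    have hp0 : p0 = 0 := by simpa using hhead
    subst hp0
    have hlastT : T.getD n 0 = n + 1 := by simpa using hlast
    have hbp : bp (0 :: T) = 1 + Bct T := by
      have hdrop1 : (0 :: T : List ℕ).drop 1 = T := by simp
      have hdrop2 : (0 :: T : List ℕ).drop 2 = T.tail := by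
        show (0 :: T : List ℕ).drop (1+1) = T.tail
        rw [← List.drop_drop, hdrop1, List.drop_one]
      rw [bp, hdrop1, hdrop2]
      rfl
    obtain ⟨ops, hv, hap, hle⟩ := key (Bct T) n T hperm hlastT le_rfl
    exact ⟨ops, hv, hap, by omega⟩
end

section
/- For every permutation π = [π_0, π_1, …, π_{n+1}] and every prefix reversal β = β(1,j) with 3 ≤ j ≤ n+1, the redefined breakpoint count decreases by at most two, i.e., b′(π) − b′(π·β) ≤ 2. -/
namespace BPAux

/-- The breakpoint predicate. -/
def p (q : ℕ × ℕ) : Bool := !(q.1 + 1 == q.2 || q.2 + 1 == q.1)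

lemma p_swap (a b : ℕ) : p (a, b) = p (b, a) := by
  simp [p, Bool.or_comm]

/-- Adjacency breakpoint count. -/
def c (l : List ℕ) : ℕ := (l.zip (l.drop 1)).countP p

@[simp] lemma c_nil : c [] = 0 := rfl
@[simp] lemma c_single (x : ℕ) : c [x] = 0 := rfl

lemma c_cons_cons (x y : ℕ) (l : List ℕ) :
    c (x :: y :: l) = (if p (x, y) then 1 else 0) + c (y :: l) := by
  simp [c, List.countP_cons]
  split <;> omega

lemma c_cons_le (x : ℕ) (l : List ℕ) : c (x :: l) ≤ c l + 1 := by
  cases l with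
  | nil => simp
  | cons y l =>
    rw [c_cons_cons]
    split <;> omega

lemma le_c_cons (x : ℕ) (l : List ℕ) : c l ≤ c (x :: l) := by
  cases l with
  | nil => simp
  | cons y l =>
    rw [c_cons_cons]
    omega

lemma c_append_le (X Y : List ℕ) : c (X ++ Y) ≤ c X + c Y + 1 := by
  induction X with
  | nil => simp only [List.nil_append, c_nil]; omega
  | cons x X ih =>
    cases X with
    | nil =>
      simpa using c_cons_le x Y
    | cons x' X' =>
      rw [List.cons_append, List.cons_append, c_cons_cons, c_cons_cons]
      rw [List.cons_append] at ih
      omega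

lemma le_c_append (X Y : List ℕ) : c X + c Y ≤ c (X ++ Y) := by
  induction X with
  | nil => simp
  | cons x X ih =>
    cases X with
    | nil =>
      simpa using le_c_cons x Y
    | cons x' X' =>
      rw [List.cons_append, List.cons_append, c_cons_cons, c_cons_cons]
      rw [List.cons_append] at ih
      omega

lemma c_concat (l : List ℕ) (x : ℕ) :
    c (l ++ [x]) = c l +
      (match l.getLast? with
       | none => 0
       | some y => if p (y, x) then 1 else 0) := by
  induction l with
  | nil => simp
  | cons a l ih =>
    cases l with
    | nil => simp [c_cons_cons] <;> omega
    | cons b l' =>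
      rw [List.cons_append, List.cons_append, c_cons_cons, c_cons_cons,
        ← List.cons_append]
      rw [List.cons_append] at ih
      simp only [List.cons_append]
      rw [ih]
      have : (a :: b :: l').getLast? = (b :: l').getLast? := by
        simp [List.getLast?_cons_cons]
      rw [this]
      omega

lemma getLast?_reverse (l : List ℕ) : l.reverse.getLast? = l.head? := by
  cases l with
  | nil => rfl
  | cons a l => simp

lemma c_reverse (l : List ℕ) : c l.reverse = c l := by
  induction l with
  | nil => rfl
  | cons x l ih =>
    rw [List.reverse_cons, c_concat, ih, getLast?_reverse]
    cases l with
    | nil => simp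
    | cons y l' =>
      rw [c_cons_cons]
      simp [p_swap y x] <;> omega

lemma bp'_eq_c (l : List ℕ) : bp' l = c l := rfl

end BPAux

/-- a prefix reversal removes at most two redefined
breakpoints. -/
theorem prefixReversal_removes_at_most_two_bp'
    (n : ℕ) (π : List ℕ) (hπ : IsPerm n π)
    (j : ℕ) (hj1 : 3 ≤ j) (hj2 : j ≤ n + 1) :
    bp' π - bp' (prefixReversal π j) ≤ 2 := by
  open BPAux in
  cases π with
  | nil =>
    have := hπ.1.length_eq
    simp at this
  | cons h t =>
    have hdrop : (h :: t).drop j = t.drop (j - 1) := by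
      cases j with
      | zero => omega
      | succ j' => simp [List.drop_succ_cons]
    have hsplit : t = t.take (j - 1) ++ t.drop (j - 1) := (List.take_append_drop _ t).symm
    set A := t.take (j - 1) with hA
    set B := t.drop (j - 1) with hB
    have hπeq : h :: t = [h] ++ A ++ B := by
      simp [← hsplit]
    have hβ : prefixReversal (h :: t) j = [h] ++ A.reverse ++ B := by
      unfold prefixReversal
      simp only [List.take_cons, List.take_zero, List.drop_succ_cons, List.drop_one,
        List.tail_cons]
      rw [hdrop]
      simp
      exact hA.symm
    rw [bp'_eq_c, bp'_eq_c, hβ]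
    have h1 : c ([h] ++ A ++ B) ≤ c A + c B + 2 := by
      have := c_append_le ([h] ++ A) B
      have := c_append_le [h] A
      have hg : c [h] = 0 := c_single h
      omega
    have h2 : c A + c B ≤ c ([h] ++ A.reverse ++ B) := by
      have h3 := le_c_append ([h] ++ A.reverse) B
      have h4 := le_c_append [h] A.reverse
      rw [c_reverse] at h4
      omega
    rw [show h :: t = [h] ++ A ++ B from hπeq]
    omega
end
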